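/- arXiv:1006.0446 — 2 statements merged into one kernel-verified Lean document; each statement's English description precedes it below -/
import Mathlib

section
/- Suppose a group Γ acts harmonically on a graph G of genus 1 and the quotient G/Γ also has genus 1. Then the ramification number R = 0 (the quotient map G → G/Γ is unramified), Γ is a cyclic group acting by rotations of the unique cycle of G, and |Γ| is a strict divisor of the number of vertices in the unique cycle of G. -/
open scoped Classical

/-- A finite connected multigraph without loop edges. -/
structure Multigraph where
  V : Type
  E : Type
  [fintypeV : Fintype V]
  [fintypeE : Fintype E]
  ends : E → Sym2 V
  loopless : ∀ e : E, ¬ (ends e).IsDiag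
  connected : (SimpleGraph.fromRel fun x y : V => ∃ e : E, ends e = s(x, y)).Connected

attribute [instance] Multigraph.fintypeV Multigraph.fintypeE

namespace Multigraph

/-- The genus (first Betti number, cyclomatic number) of a multigraph. -/
def genus (G : Multigraph) : ℤ :=
  (Fintype.card G.E : ℤ) - (Fintype.card G.V : ℤ) + 1

/-- A cycle in a multigraph, given as a nonempty set of edges such that every vertex is
incident to either 0 or 2 of its edges. -/
def IsCycleSet (G : Multigraph) (C : Set G.E) : Prop :=
  C.Nonempty ∧ ∀ x : G.V,
    Nat.card {e : G.E // e ∈ C ∧ x ∈ G.ends e} = 0 ∨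
    Nat.card {e : G.E // e ∈ C ∧ x ∈ G.ends e} = 2

end Multigraph

/-- A morphism of multigraphs: vertices go to vertices, and each edge goes either to an
edge joining the images of its endpoints, or to the common image of its endpoints
(in which case the edge is *vertical*). -/
structure Morphism (G G' : Multigraph) where
  vmap : G.V → G'.V
  emap : G.E → G'.E ⊕ G'.V
  compat : ∀ e : G.E,
    (∀ e', emap e = Sum.inl e' → G'.ends e' = (G.ends e).map vmap) ∧
    (∀ v, emap e = Sum.inr v → (G.ends e).map vmap = Sym2.diag v)

namespace Morphism

/-- A morphism is harmonic if for every vertex `x`, the number of edges incident to `x`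
mapping to a given edge `e'` incident to `φ(x)` is independent of the choice of `e'`. -/
def Harmonic {G G' : Multigraph} (φ : Morphism G G') : Prop :=
  ∀ (x : G.V) (e₁ e₂ : G'.E), φ.vmap x ∈ G'.ends e₁ → φ.vmap x ∈ G'.ends e₂ →
    Nat.card {e : G.E // x ∈ G.ends e ∧ φ.emap e = Sum.inl e₁} =
    Nat.card {e : G.E // x ∈ G.ends e ∧ φ.emap e = Sum.inl e₂}

/-- A morphism is nonconstant if its image is not a single vertex. -/
def Nonconstant {G G' : Multigraph} (φ : Morphism G G') : Prop :=
  ∃ x y : G.V, φ.vmap x ≠ φ.vmap y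

/-- Composition of morphisms of multigraphs. -/
def comp {G₁ G₂ G₃ : Multigraph} (ψ : Morphism G₂ G₃) (φ : Morphism G₁ G₂) :
    Morphism G₁ G₃ where
  vmap := ψ.vmap ∘ φ.vmap
  emap e := Sum.elim ψ.emap (fun v => Sum.inr (ψ.vmap v)) (φ.emap e)
  compat e := by
    constructor
    · intro e'' h
      rcases hφ : φ.emap e with e' | v
      · simp only [hφ, Sum.elim_inl] at h
        have h1 := (φ.compat e).1 e' hφ
        have h2 := (ψ.compat e').1 e'' h
        rw [h2, h1, Sym2.map_map]
      · simp only [hφ, Sum.elim_inr] at h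
        simp at h
    · intro v h
      rcases hφ : φ.emap e with e' | v₀
      · simp only [hφ, Sum.elim_inl] at h
        have h1 := (φ.compat e).1 e' hφ
        have h2 := (ψ.compat e').2 v h
        rw [← Sym2.map_map, ← h1]
        exact h2
      · simp only [hφ, Sum.elim_inr, Sum.inr.injEq] at h
        have h1 := (φ.compat e).2 v₀ hφ
        subst h
        rw [← Sym2.map_map, h1]
        rfl
end Morphism

/-- A group of automorphisms of a multigraph `G` (a faithful action of `Γ` on `G` by
automorphisms, i.e. a subgroup of `Aut(G)`). -/
structure GraphAction (Γ : Type) [Group Γ] (G : Multigraph) where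
  actV : Γ →* Equiv.Perm G.V
  actE : Γ →* Equiv.Perm G.E
  ends_map : ∀ (γ : Γ) (e : G.E), G.ends (actE γ e) = (G.ends e).map (actV γ)
  faithful : ∀ γ : Γ, (∀ x : G.V, actV γ x = x) → (∀ e : G.E, actE γ e = e) → γ = 1

namespace GraphAction

variable {Γ : Type} [Group Γ] {G : Multigraph}

/-- Two vertices lie in the same `Δ`-orbit. -/
def vrel (A : GraphAction Γ G) (Δ : Subgroup Γ) (x y : G.V) : Prop :=
  ∃ δ ∈ Δ, A.actV δ x = y

/-- Two edges lie in the same `Δ`-orbit. -/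
def erel (A : GraphAction Γ G) (Δ : Subgroup Γ) (e f : G.E) : Prop :=
  ∃ δ ∈ Δ, A.actE δ e = f

/-- The setoid of `Δ`-orbits of vertices. -/
def vSetoid (A : GraphAction Γ G) (Δ : Subgroup Γ) : Setoid G.V where
  r := A.vrel Δ
  iseqv := by
    constructor
    · intro x; exact ⟨1, Δ.one_mem, by simp⟩
    · rintro x y ⟨δ, hδ, h⟩
      refine ⟨δ⁻¹, Δ.inv_mem hδ, ?_⟩
      rw [map_inv, ← h]
      exact Equiv.symm_apply_apply _ _
    · rintro x y z ⟨δ₁, h1, e1⟩ ⟨δ₂, h2, e2⟩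
      refine ⟨δ₂ * δ₁, Δ.mul_mem h2 h1, ?_⟩
      rw [map_mul]
      simp [Equiv.Perm.mul_apply, e1, e2]

/-- The setoid of `Δ`-orbits of edges. -/
def eSetoid (A : GraphAction Γ G) (Δ : Subgroup Γ) : Setoid G.E where
  r := A.erel Δ
  iseqv := by
    constructor
    · intro e; exact ⟨1, Δ.one_mem, by simp⟩
    · rintro e f ⟨δ, hδ, h⟩
      refine ⟨δ⁻¹, Δ.inv_mem hδ, ?_⟩
      rw [map_inv, ← h]
      exact Equiv.symm_apply_apply _ _
    · rintro e f k ⟨δ₁, h1, e1⟩ ⟨δ₂, h2, e2⟩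
      refine ⟨δ₂ * δ₁, Δ.mul_mem h2 h1, ?_⟩
      rw [map_mul]
      simp [Equiv.Perm.mul_apply, e1, e2]

/-- An edge is `Δ`-vertical if its two endpoints lie in the same `Δ`-orbit (so it is
contracted by the quotient morphism `G → G/Δ`). -/
def Vertical (A : GraphAction Γ G) (Δ : Subgroup Γ) (e : G.E) : Prop :=
  ∃ x y : G.V, G.ends e = s(x, y) ∧ A.vrel Δ x y

/-- The vertex set of the quotient graph `G/Δ`: the `Δ`-orbits of vertices. -/
abbrev quotV (A : GraphAction Γ G) (Δ : Subgroup Γ) : Type :=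
  Quotient (A.vSetoid Δ)

/-- The edge set of the quotient graph `G/Δ`: the `Δ`-orbits of non-vertical edges. -/
abbrev quotE (A : GraphAction Γ G) (Δ : Subgroup Γ) : Type :=
  Quotient ((A.eSetoid Δ).comap (Subtype.val : {e : G.E // ¬ A.Vertical Δ e} → G.E))

/-- The genus of the quotient graph `G/Δ`. -/
noncomputable def quotGenus (A : GraphAction Γ G) (Δ : Subgroup Γ) : ℤ :=
  (Nat.card (A.quotE Δ) : ℤ) - (Nat.card (A.quotV Δ) : ℤ) + 1

/-- The order of the stabilizer `Δ_x` of a vertex `x`. -/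
noncomputable def stabOrder (A : GraphAction Γ G) (Δ : Subgroup Γ) (x : G.V) : ℕ :=
  Nat.card {γ : Γ // γ ∈ Δ ∧ A.actV γ x = x}

/-- The vertical multiplicity of a vertex `x`: the number of `Δ`-vertical edges
incident to `x`. -/
noncomputable def vertMult (A : GraphAction Γ G) (Δ : Subgroup Γ) (x : G.V) : ℕ :=
  Nat.card {e : G.E // x ∈ G.ends e ∧ A.Vertical Δ e}

/-- `r_y = |Δ_x|` for a vertex `y` of the quotient `G/Δ` and any `x` in the fiber over `y`. -/
noncomputable def r (A : GraphAction Γ G) (Δ : Subgroup Γ) (y : A.quotV Δ) : ℕ :=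
  A.stabOrder Δ (Quotient.out y)

/-- `w_y = v(x)/|Δ_x|` for a vertex `y` of the quotient `G/Δ` and any `x` in the fiber. -/
noncomputable def w (A : GraphAction Γ G) (Δ : Subgroup Γ) (y : A.quotV Δ) : ℕ :=
  A.vertMult Δ (Quotient.out y) / A.r Δ y

/-- The ramification number `R = Σ_y [2(1 - 1/r_y) + w_y]` of the quotient map `G → G/Δ`. -/
noncomputable def ram (A : GraphAction Γ G) (Δ : Subgroup Γ) : ℚ :=
  ∑ᶠ y : A.quotV Δ, (2 * (1 - 1 / (A.r Δ y : ℚ)) + (A.w Δ y : ℚ))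

/-- A vertex `y` of the quotient `G/Δ` is a branch point if `2(1 - 1/r_y) + w_y > 0`. -/
def IsBranch (A : GraphAction Γ G) (Δ : Subgroup Γ) (y : A.quotV Δ) : Prop :=
  0 < 2 * (1 - 1 / (A.r Δ y : ℚ)) + (A.w Δ y : ℚ)

/-- The quotient morphism `φ_Δ : G → G/Δ` is harmonic: for every vertex `x` of `G` and
every pair of quotient edges incident to the image of `x`, the numbers of preimages
incident to `x` agree. -/
def QuotHarmonic (A : GraphAction Γ G) (Δ : Subgroup Γ) : Prop :=
  ∀ (x : G.V) (e₁ e₂ : G.E), ¬ A.Vertical Δ e₁ → ¬ A.Vertical Δ e₂ →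
    (∃ v ∈ G.ends e₁, A.vrel Δ x v) → (∃ v ∈ G.ends e₂, A.vrel Δ x v) →
    Nat.card {e : G.E // x ∈ G.ends e ∧ A.erel Δ e e₁} =
    Nat.card {e : G.E // x ∈ G.ends e ∧ A.erel Δ e e₂}

/-- The quotient morphism `φ_Δ : G → G/Δ` is non-degenerate: no neighborhood `x(1)` is
contracted to a vertex, i.e. every vertex has a neighbor outside its `Δ`-orbit. -/
def QuotNondeg (A : GraphAction Γ G) (Δ : Subgroup Γ) : Prop :=
  ∀ x : G.V, ∃ e : G.E, x ∈ G.ends e ∧ ∃ y ∈ G.ends e, ¬ A.vrel Δ x y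

/-- `Γ` acts harmonically on `G` if for every subgroup `Δ ≤ Γ` the quotient morphism
`φ_Δ : G → G/Δ` is harmonic and non-degenerate. -/
def ActsHarmonically (A : GraphAction Γ G) : Prop :=
  ∀ Δ : Subgroup Γ, A.QuotHarmonic Δ ∧ A.QuotNondeg Δ

/-- The quotient map `G → G/Δ` is horizontally unramified: all vertex stabilizers in `Δ`
are trivial. -/
def HorizUnramified (A : GraphAction Γ G) (Δ : Subgroup Γ) : Prop :=
  ∀ (x : G.V) (γ : Γ), γ ∈ Δ → A.actV γ x = x → γ = 1

end GraphAction

/-- `M g` is the maximal order of a group acting harmonically on a graph of genus `g`. -/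
noncomputable def M (g : ℕ) : ℕ :=
  sSup {n : ℕ | ∃ (Γ : Type) (i : Group Γ) (G : Multigraph) (A : @GraphAction Γ i G),
    @GraphAction.ActsHarmonically Γ i G A ∧ G.genus = (g : ℤ) ∧ Nat.card Γ = n}
namespace Multigraph

variable (G : Multigraph)

/-- The boundary map over `F₂`. -/
noncomputable def bnd : (G.E → ZMod 2) →ₗ[ZMod 2] (G.V → ZMod 2) where
  toFun u := fun x => ∑ e : G.E, if x ∈ G.ends e then u e else 0
  map_add' u v := by
    funext x
    show (∑ e : G.E, if x ∈ G.ends e then (u+v) e else 0) = _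
    rw [show ((fun u x => ∑ e : G.E, if x ∈ G.ends e then u e else 0) u + (fun u x => ∑ e : G.E, if x ∈ G.ends e then u e else 0) v) x = (∑ e : G.E, if x ∈ G.ends e then u e else 0) + (∑ e : G.E, if x ∈ G.ends e then v e else 0) from rfl, ← Finset.sum_add_distrib]
    refine Finset.sum_congr rfl fun e _ => ?_
    by_cases h : x ∈ G.ends e <;> simp [h]
  map_smul' c u := by
    funext x
    show (∑ e : G.E, if x ∈ G.ends e then (c • u) e else 0) = c * ∑ e : G.E, if x ∈ G.ends e then u e else 0
    rw [Finset.mul_sum]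
    refine Finset.sum_congr rfl fun e _ => ?_
    by_cases h : x ∈ G.ends e <;> simp [h]

lemma bnd_apply (u : G.E → ZMod 2) (x : G.V) :
    G.bnd u x = ∑ e : G.E, if x ∈ G.ends e then u e else 0 := rfl

lemma zmod2_cases : ∀ a : ZMod 2, a = 0 ∨ a = 1 := by decide

/-- endpoints of an edge: two distinct vertices -/
lemma exists_ends (e : G.E) : ∃ x y : G.V, x ≠ y ∧ G.ends e = s(x, y) := by
  obtain ⟨⟨x, y⟩, h⟩ := Quot.exists_rep (G.ends e)
  refine ⟨x, y, ?_, h.symm⟩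
  intro rfl
  exact G.loopless e (by rw [← h]; exact Sym2.mk_isDiag_iff.2 rfl)

lemma card_mem_ends (e : G.E) : (Finset.univ.filter (· ∈ G.ends e)).card = 2 := by
  obtain ⟨x, y, hxy, h⟩ := G.exists_ends e
  have : Finset.univ.filter (· ∈ G.ends e) = {x, y} := by
    ext v
    simp [h, Sym2.mem_iff]
  rw [this, Finset.card_pair hxy]

/-- the sum functional -/
noncomputable def sfun : (G.V → ZMod 2) →ₗ[ZMod 2] ZMod 2 where
  toFun w := ∑ x : G.V, w x
  map_add' u v := by rw [← Finset.sum_add_distrib]; rfl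
  map_smul' c u := by simp [Finset.mul_sum]

lemma range_bnd_le : LinearMap.range G.bnd ≤ LinearMap.ker G.sfun := by
  rintro - ⟨u, rfl⟩
  simp only [LinearMap.mem_ker]
  show ∑ x : G.V, G.bnd u x = 0
  simp only [bnd_apply]
  rw [Finset.sum_comm]
  refine Finset.sum_eq_zero fun e _ => ?_
  rw [← Finset.sum_filter, Finset.sum_const, card_mem_ends]
  exact CharTwo.two_nsmul _

lemma finrank_ker_sfun {α : Type} [Fintype α] [Nonempty α]
    (σ : (α → ZMod 2) →ₗ[ZMod 2] ZMod 2)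
    (hσ : Function.Surjective σ) :
    Module.finrank (ZMod 2) (LinearMap.ker σ) + 1 = Fintype.card α := by
  have h1 := LinearMap.finrank_range_add_finrank_ker σ
  rw [Module.finrank_pi] at h1
  rw [LinearMap.range_eq_top.2 hσ] at h1
  rw [finrank_top, Module.finrank_self] at h1
  omega

lemma sfun_surjective : Function.Surjective G.sfun := by
  intro c
  have : Nonempty G.V := G.connected.nonempty
  obtain ⟨x₀⟩ := this
  refine ⟨Pi.single x₀ c, ?_⟩
  show ∑ x : G.V, Pi.single x₀ c x = c
  rw [Finset.sum_eq_single x₀]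
  · simp
  · intro b _ hb; simp [Pi.single_eq_of_ne hb]
  · simp

end Multigraph
namespace Multigraph

variable (G : Multigraph)

/-- basis-ish vector -/
noncomputable def dv (x : G.V) : G.V → ZMod 2 := fun j => if x = j then 1 else 0

lemma bnd_single (e : G.E) (v : G.V) :
    G.bnd (fun f => if e = f then 1 else 0) v = if v ∈ G.ends e then 1 else 0 := by
  rw [bnd_apply, Finset.sum_eq_single e]
  · simp
  · intro b _ hb; simp [Ne.symm hb]
  · simp

lemma dv_sub_dv_mem_range (x y : G.V) :
    G.dv x - G.dv y ∈ LinearMap.range G.bnd := by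
  have hadj : ∀ a b : G.V,
      (SimpleGraph.fromRel fun x y : G.V => ∃ e : G.E, G.ends e = s(x, y)).Adj a b →
      G.dv a - G.dv b ∈ LinearMap.range G.bnd := by
    intro a b hab
    rw [SimpleGraph.fromRel_adj] at hab
    obtain ⟨hne, h⟩ := hab
    have h' : ∃ e, G.ends e = s(a, b) := by
      rcases h with h | h
      · exact h
      · obtain ⟨e, he⟩ := h; exact ⟨e, by rw [he, Sym2.eq_swap]⟩
    obtain ⟨e, he⟩ := h'
    refine ⟨fun f => if e = f then 1 else 0, ?_⟩
    funext v
    rw [bnd_single, he]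
    simp only [Pi.sub_apply, dv, Sym2.mem_iff]
    by_cases hva : a = v
    · subst hva
      simp [Ne.symm hne, CharTwo.sub_eq_add]
    · have hva' : ¬ v = a := fun h => hva h.symm
      by_cases hvb : b = v
      · subst hvb
        simp [hva, hva', CharTwo.sub_eq_add]
      · have hvb' : ¬ v = b := fun h => hvb h.symm
        simp [hva, hvb, hva', hvb']
  obtain ⟨p⟩ := G.connected.preconnected x y
  induction p with
  | nil => simp
  | @cons u v w h p ih =>
    have h1 := hadj u v h
    have h2 := add_mem h1 ih
    simpa using h2

lemma finrank_quot_le_one :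
    Module.finrank (ZMod 2) ((G.V → ZMod 2) ⧸ LinearMap.range G.bnd) ≤ 1 := by
  have : Nonempty G.V := G.connected.nonempty
  obtain ⟨x₀⟩ := this
  set R := LinearMap.range G.bnd
  let F : ZMod 2 →ₗ[ZMod 2] ((G.V → ZMod 2) ⧸ R) :=
    { toFun := fun c => c • Submodule.Quotient.mk (G.dv x₀)
      map_add' := fun a b => add_smul a b _
      map_smul' := fun a b => by simp [mul_smul] }
  have hsurj : Function.Surjective F := by
    intro q
    obtain ⟨w, rfl⟩ := Submodule.Quotient.mk_surjective R q
    refine ⟨∑ x : G.V, w x, ?_⟩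
    have hw : w = ∑ x : G.V, w x • G.dv x := pi_eq_sum_univ w
    have hmk : ∀ x : G.V, (Submodule.Quotient.mk (G.dv x) : (G.V → ZMod 2) ⧸ R) =
        Submodule.Quotient.mk (G.dv x₀) := by
      intro x
      rw [Submodule.Quotient.eq]
      exact G.dv_sub_dv_mem_range x x₀
    have hF : F (∑ x : G.V, w x) = (∑ x : G.V, w x) • Submodule.Quotient.mk (G.dv x₀) := rfl
    rw [hF, Finset.sum_smul]
    conv_rhs => rw [hw, ← Submodule.mkQ_apply, map_sum]
    refine Finset.sum_congr rfl fun x _ => ?_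
    rw [Submodule.mkQ_apply, Submodule.Quotient.mk_smul, hmk x]
  have h1 : LinearMap.range F = ⊤ := LinearMap.range_eq_top.2 hsurj
  have h2 := LinearMap.finrank_range_le F
  rw [h1, finrank_top, Module.finrank_self] at h2
  exact h2

lemma finrank_ker_add : Module.finrank (ZMod 2) (LinearMap.ker G.bnd) +
    (Module.finrank (ZMod 2) (LinearMap.range G.bnd)) = Fintype.card G.E := by
  have := LinearMap.finrank_range_add_finrank_ker G.bnd
  rw [Module.finrank_pi] at this
  omega

lemma finrank_range_ge : Fintype.card G.V ≤
    Module.finrank (ZMod 2) (LinearMap.range G.bnd) + 1 := by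
  have h1 := Submodule.finrank_quotient_add_finrank (LinearMap.range G.bnd)
  rw [Module.finrank_pi] at h1
  have h2 := G.finrank_quot_le_one
  omega

lemma finrank_ker_le_one (hg : Fintype.card G.E ≤ Fintype.card G.V) :
    Module.finrank (ZMod 2) (LinearMap.ker G.bnd) ≤ 1 := by
  have h1 := G.finrank_ker_add
  have h2 := G.finrank_range_ge
  omega

lemma exists_ker_ne_zero (hg : Fintype.card G.V ≤ Fintype.card G.E) :
    ∃ u, u ∈ LinearMap.ker G.bnd ∧ u ≠ 0 := by
  have : Nonempty G.V := G.connected.nonempty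
  have h1 := G.finrank_ker_add
  have h2 : Module.finrank (ZMod 2) (LinearMap.range G.bnd) + 1 ≤ Fintype.card G.V := by
    have hm : Module.finrank (ZMod 2) (LinearMap.range G.bnd) ≤
        Module.finrank (ZMod 2) (LinearMap.ker G.sfun) :=
      Submodule.finrank_mono G.range_bnd_le
    have hs := finrank_ker_sfun G.sfun G.sfun_surjective
    omega
  have hk : Module.finrank (ZMod 2) (LinearMap.ker G.bnd) ≠ 0 := by omega
  have : LinearMap.ker G.bnd ≠ ⊥ := by
    intro h
    rw [h] at hk
    exact hk (finrank_bot _ _)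
  obtain ⟨u, hu, hune⟩ := (Submodule.ne_bot_iff _).1 this
  exact ⟨u, hu, hune⟩

lemma ker_degree_even (u : G.E → ZMod 2) (hu : u ∈ LinearMap.ker G.bnd) (x : G.V) :
    2 ∣ Nat.card {e : G.E // u e ≠ 0 ∧ x ∈ G.ends e} := by
  have h0 : G.bnd u x = 0 := by rw [LinearMap.mem_ker] at hu; rw [hu]; rfl
  rw [bnd_apply] at h0
  have heq : ∀ e : G.E, (if x ∈ G.ends e then u e else 0) =
      (if u e ≠ 0 ∧ x ∈ G.ends e then 1 else 0) := by
    intro e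
    rcases zmod2_cases (u e) with h | h <;> by_cases hx : x ∈ G.ends e <;>
      simp [h, hx]
  rw [Finset.sum_congr rfl (fun e _ => heq e), Finset.sum_boole] at h0
  rw [Nat.card_eq_fintype_card, Fintype.card_subtype]
  exact (ZMod.natCast_eq_zero_iff _ 2).1 h0

end Multigraph
namespace F2Aux

variable {ε ν : Type} [Fintype ε] [Fintype ν]

noncomputable def bmap (inc : ε → ν → Prop) : (ε → ZMod 2) →ₗ[ZMod 2] (ν → ZMod 2) where
  toFun u := fun x => ∑ e : ε, if inc e x then u e else 0
  map_add' u v := by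
    funext x
    show (∑ e : ε, if inc e x then (u+v) e else 0) =
      (∑ e : ε, if inc e x then u e else 0) + (∑ e : ε, if inc e x then v e else 0)
    rw [← Finset.sum_add_distrib]
    refine Finset.sum_congr rfl fun e _ => ?_
    by_cases h : inc e x <;> simp [h]
  map_smul' c u := by
    funext x
    show (∑ e : ε, if inc e x then (c • u) e else 0) = c * ∑ e : ε, if inc e x then u e else 0
    rw [Finset.mul_sum]
    refine Finset.sum_congr rfl fun e _ => ?_
    by_cases h : inc e x <;> simp [h]

lemma bmap_apply (inc : ε → ν → Prop) (u : ε → ZMod 2) (x : ν) :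
    bmap inc u x = ∑ e : ε, if inc e x then u e else 0 := rfl

noncomputable def smap (ν : Type) [Fintype ν] : (ν → ZMod 2) →ₗ[ZMod 2] ZMod 2 where
  toFun w := ∑ x : ν, w x
  map_add' u v := by rw [← Finset.sum_add_distrib]; rfl
  map_smul' c u := by simp [Finset.mul_sum]

lemma smap_surjective [Nonempty ν] : Function.Surjective (smap ν) := by
  intro c
  obtain ⟨x₀⟩ := (inferInstance : Nonempty ν)
  refine ⟨Pi.single x₀ c, ?_⟩
  show ∑ x : ν, Pi.single x₀ c x = c
  rw [Finset.sum_eq_single x₀]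
  · simp
  · intro b _ hb; simp [Pi.single_eq_of_ne hb]
  · simp

lemma range_bmap_le (inc : ε → ν → Prop)
    (h2 : ∀ e, (Finset.univ.filter (inc e)).card = 2) :
    LinearMap.range (bmap inc) ≤ LinearMap.ker (smap ν) := by
  rintro - ⟨u, rfl⟩
  simp only [LinearMap.mem_ker]
  show ∑ x : ν, bmap inc u x = 0
  simp only [bmap_apply]
  rw [Finset.sum_comm]
  refine Finset.sum_eq_zero fun e _ => ?_
  rw [← Finset.sum_filter, Finset.sum_const, h2]
  exact CharTwo.two_nsmul _

lemma finrank_ker_bmap_ge (inc : ε → ν → Prop) [Nonempty ν]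
    (h2 : ∀ e, (Finset.univ.filter (inc e)).card = 2) :
    Fintype.card ε + 1 ≤
      Module.finrank (ZMod 2) (LinearMap.ker (bmap inc)) + Fintype.card ν := by
  have h1 := LinearMap.finrank_range_add_finrank_ker (bmap inc)
  rw [Module.finrank_pi] at h1
  have hm : Module.finrank (ZMod 2) (LinearMap.range (bmap inc)) ≤
      Module.finrank (ZMod 2) (LinearMap.ker (smap ν)) :=
    Submodule.finrank_mono (range_bmap_le inc h2)
  have hs := Multigraph.finrank_ker_sfun (smap ν) smap_surjective
  omega

end F2Aux

namespace Multigraph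

variable (G : Multigraph)

lemma ker_degree_dichotomy (hgle : Fintype.card G.E ≤ Fintype.card G.V)
    (u : G.E → ZMod 2) (hu : u ∈ LinearMap.ker G.bnd) (x₀ : G.V) :
    Nat.card {e : G.E // u e ≠ 0 ∧ x₀ ∈ G.ends e} = 0 ∨
    Nat.card {e : G.E // u e ≠ 0 ∧ x₀ ∈ G.ends e} = 2 := by
  by_contra hcon
  push_neg at hcon
  obtain ⟨hn0, hn2⟩ := hcon
  obtain ⟨k, hk⟩ := G.ker_degree_even u hu x₀
  have hd4 : 4 ≤ Nat.card {e : G.E // u e ≠ 0 ∧ x₀ ∈ G.ends e} := by omega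
  -- subtypes
  set E' := {e : G.E // u e ≠ 0} with hE'
  set V' := {v : G.V // ∃ e : G.E, u e ≠ 0 ∧ v ∈ G.ends e} with hV'
  set inc : E' → V' → Prop := fun e x => x.1 ∈ G.ends e.1 with hinc
  -- x₀ lies in V'
  have hx₀V' : ∃ e : G.E, u e ≠ 0 ∧ x₀ ∈ G.ends e := by
    have hpos : 0 < Nat.card {e : G.E // u e ≠ 0 ∧ x₀ ∈ G.ends e} := by omega
    obtain ⟨⟨e, he⟩⟩ := (Nat.card_pos_iff.1 hpos).1
    exact ⟨e, he⟩
  haveI : Nonempty V' := ⟨⟨x₀, hx₀V'⟩⟩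
  -- each edge of E' has exactly two endpoints in V'
  have h2 : ∀ e : E', (Finset.univ.filter (inc e)).card = 2 := by
    intro e
    have hcard : Fintype.card {x : V' // inc e x} = Fintype.card {v : G.V // v ∈ G.ends e.1} := by
      refine Fintype.card_congr ⟨fun p => ⟨p.1.1, p.2⟩, fun p => ⟨⟨p.1, ⟨e.1, e.2, p.2⟩⟩, p.2⟩, ?_, ?_⟩
      · rintro ⟨⟨v, hv⟩, h⟩; rfl
      · rintro ⟨v, h⟩; rfl
    have := G.card_mem_ends e.1
    rw [← Fintype.card_subtype] at this ⊢
    rw [hcard, this]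
  -- degree identities
  have hdeg : ∀ x : V', (Finset.univ.filter (fun e : E' => inc e x)).card =
      Nat.card {e : G.E // u e ≠ 0 ∧ x.1 ∈ G.ends e} := by
    intro x
    rw [← Fintype.card_subtype, Nat.card_eq_fintype_card]
    exact Fintype.card_congr ((Equiv.subtypeSubtypeEquivSubtypeInter
      (fun e : G.E => u e ≠ 0) (fun e => x.1 ∈ G.ends e)))
  have hdeg2 : ∀ x : V', 2 ≤ (Finset.univ.filter (fun e : E' => inc e x)).card := by
    intro x
    rw [hdeg]
    obtain ⟨k', hk'⟩ := G.ker_degree_even u hu x.1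
    have hpos : 0 < Nat.card {e : G.E // u e ≠ 0 ∧ x.1 ∈ G.ends e} := by
      obtain ⟨e, he⟩ := x.2
      exact Nat.card_pos_iff.2 ⟨⟨⟨e, he⟩⟩, inferInstance⟩
    omega
  -- handshake
  have hhs : ∑ x : V', (Finset.univ.filter (fun e : E' => inc e x)).card
      = 2 * Fintype.card E' := by
    have : ∀ x : V', (Finset.univ.filter (fun e : E' => inc e x)).card =
        ∑ e : E', if inc e x then 1 else 0 := by
      intro x; rw [Finset.sum_boole]; simp
    rw [Finset.sum_congr rfl fun x _ => this x, Finset.sum_comm]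
    have : ∀ e : E', (∑ x : V', if inc e x then 1 else 0) = 2 := by
      intro e; rw [Finset.sum_boole]; rw [h2 e]; rfl
    rw [Finset.sum_congr rfl fun e _ => this e, Finset.sum_const, Finset.card_univ]
    ring
  -- lower bound on the handshake sum
  set xx : V' := ⟨x₀, hx₀V'⟩ with hxx
  have hlow : 2 * Fintype.card V' + 2 ≤ ∑ x : V', (Finset.univ.filter (fun e : E' => inc e x)).card := by
    rw [← Finset.sum_erase_add _ _ (Finset.mem_univ xx)]
    have h1 : (Finset.univ.erase xx).card • 2 ≤ ∑ x ∈ Finset.univ.erase xx, (Finset.univ.filter (fun e : E' => inc e x)).card :=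
      Finset.card_nsmul_le_sum _ _ _ (fun x _ => hdeg2 x)
    have h4 : 4 ≤ (Finset.univ.filter (fun e : E' => inc e xx)).card := by
      rw [hdeg]; exact hd4
    have hce : (Finset.univ.erase xx).card = Fintype.card V' - 1 := by
      rw [Finset.card_erase_of_mem (Finset.mem_univ xx), Finset.card_univ]
    have hpos : 1 ≤ Fintype.card V' := Fintype.card_pos
    simp only [smul_eq_mul] at h1
    omega
  have hEV' : Fintype.card V' + 1 ≤ Fintype.card E' := by omega
  -- now the kernel of bmap inc embeds into ker bnd
  have hrank := F2Aux.finrank_ker_bmap_ge inc (fun e => by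
    have := h2 e
    convert this using 2
    apply Finset.filter_congr_decidable)
  -- J : extension by zero
  let J : (E' → ZMod 2) →ₗ[ZMod 2] (G.E → ZMod 2) :=
    { toFun := fun w e => if h : u e ≠ 0 then w ⟨e, h⟩ else 0
      map_add' := fun w v => by
        funext e
        show (if h : u e ≠ 0 then (w + v) ⟨e, h⟩ else 0) =
          (if h : u e ≠ 0 then w ⟨e, h⟩ else 0) + (if h : u e ≠ 0 then v ⟨e, h⟩ else 0)
        by_cases h : u e ≠ 0
        · rw [dif_pos h, dif_pos h, dif_pos h]; rfl
        · rw [dif_neg h, dif_neg h, dif_neg h, add_zero]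
      map_smul' := fun c w => by
        funext e
        show (if h : u e ≠ 0 then (c • w) ⟨e, h⟩ else 0) =
          c • (if h : u e ≠ 0 then w ⟨e, h⟩ else 0)
        by_cases h : u e ≠ 0
        · rw [dif_pos h, dif_pos h]; rfl
        · rw [dif_neg h, dif_neg h, smul_zero] }
  have hJapp : ∀ (w : E' → ZMod 2) (e : G.E), J w e = if h : u e ≠ 0 then w ⟨e, h⟩ else 0 :=
    fun w e => rfl
  have hJker : ∀ w ∈ LinearMap.ker (F2Aux.bmap inc), J w ∈ LinearMap.ker G.bnd := by
    intro w hw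
    rw [LinearMap.mem_ker]
    funext x
    show G.bnd (J w) x = 0
    rw [bnd_apply]
    have hsplit := Fintype.sum_subtype_add_sum_subtype (fun e : G.E => u e ≠ 0)
      (fun e => if x ∈ G.ends e then J w e else 0)
    rw [← hsplit]
    have hz : (∑ e : {e : G.E // ¬ u e ≠ 0}, if x ∈ G.ends e.1 then J w e.1 else 0) = 0 := by
      refine Finset.sum_eq_zero fun e _ => ?_
      rw [hJapp]
      rw [dif_neg e.2]
      simp
    rw [hz, add_zero]
    have hfirst : (∑ e : E', if x ∈ G.ends e.1 then J w e.1 else 0) =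
        ∑ e : E', if x ∈ G.ends e.1 then w e else 0 := by
      refine Finset.sum_congr rfl fun e _ => ?_
      rw [hJapp, dif_pos e.2]
    rw [hfirst]
    by_cases hx : ∃ e : G.E, u e ≠ 0 ∧ x ∈ G.ends e
    · have := LinearMap.mem_ker.1 hw
      have happ : F2Aux.bmap inc w ⟨x, hx⟩ = 0 := by rw [this]; rfl
      rw [F2Aux.bmap_apply] at happ
      refine (Finset.sum_congr rfl fun e _ => ?_).trans happ
      by_cases hc : x ∈ G.ends (e : G.E)
      · rw [if_pos hc, if_pos (show inc e ⟨x, hx⟩ from hc)]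
      · rw [if_neg hc, if_neg (show ¬ inc e ⟨x, hx⟩ from hc)]
    · refine Finset.sum_eq_zero fun e _ => ?_
      rw [if_neg (fun hmem => hx ⟨e.1, e.2, hmem⟩)]
  let J' : LinearMap.ker (F2Aux.bmap inc) →ₗ[ZMod 2] LinearMap.ker G.bnd :=
    LinearMap.codRestrict _ (J.comp (Submodule.subtype _)) (fun w => hJker w.1 w.2)
  have hJ'inj : Function.Injective J' := by
    intro w v hwv
    ext e
    have : J w.1 = J v.1 := congrArg Subtype.val hwv
    have := congrFun this e.1
    rw [hJapp, hJapp, dif_pos e.2, dif_pos e.2] at this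
    convert this <;> exact (Subtype.eta _ _).symm
  have hrank2 : Module.finrank (ZMod 2) (LinearMap.ker (F2Aux.bmap inc)) ≤
      Module.finrank (ZMod 2) (LinearMap.ker G.bnd) :=
    LinearMap.finrank_le_finrank_of_injective hJ'inj
  have := G.finrank_ker_le_one hgle
  omega

/-- existence of a cycle set -/
lemma exists_cycleSet (hcard : Fintype.card G.E = Fintype.card G.V) :
    ∃ C : Set G.E, G.IsCycleSet C := by
  obtain ⟨u, hu, hune⟩ := G.exists_ker_ne_zero (le_of_eq hcard.symm)
  refine ⟨{e | u e ≠ 0}, ?_, ?_⟩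
  · obtain ⟨e, he⟩ := Function.ne_iff.1 hune
    exact ⟨e, by simpa using he⟩
  · intro x
    exact G.ker_degree_dichotomy (le_of_eq hcard) u hu x
lemma indicator_mem_ker (C : Set G.E) (hC : G.IsCycleSet C) :
    (fun e => if e ∈ C then (1 : ZMod 2) else 0) ∈ LinearMap.ker G.bnd ∧
    (fun e => if e ∈ C then (1 : ZMod 2) else 0) ≠ (0 : G.E → ZMod 2) := by
  constructor
  · rw [LinearMap.mem_ker]
    funext x
    show G.bnd _ x = 0
    rw [bnd_apply]
    have heq : ∀ e : G.E, (if x ∈ G.ends e then (if e ∈ C then (1:ZMod 2) else 0) else 0) =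
        (if e ∈ C ∧ x ∈ G.ends e then 1 else 0) := by
      intro e
      by_cases h1 : x ∈ G.ends e <;> by_cases h2 : e ∈ C <;> simp [h1, h2]
    rw [Finset.sum_congr rfl fun e _ => heq e, Finset.sum_boole]
    have hcc : (Finset.univ.filter (fun e => e ∈ C ∧ x ∈ G.ends e)).card =
        Nat.card {e : G.E // e ∈ C ∧ x ∈ G.ends e} := by
      rw [Nat.card_eq_fintype_card, Fintype.card_subtype]
    rw [hcc]
    rcases hC.2 x with h | h
    · rw [h]; simp
    · rw [h]; exact ZMod.natCast_self 2
  · obtain ⟨e, he⟩ := hC.1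
    intro h0
    have := congrFun h0 e
    rw [if_pos he] at this
    exact one_ne_zero this

/-- uniqueness of the cycle set -/
lemma cycleSet_unique (hgle : Fintype.card G.E ≤ Fintype.card G.V)
    (C₁ C₂ : Set G.E) (h₁ : G.IsCycleSet C₁) (h₂ : G.IsCycleSet C₂) : C₁ = C₂ := by
  obtain ⟨hk₁, hne₁⟩ := G.indicator_mem_ker C₁ h₁
  obtain ⟨hk₂, hne₂⟩ := G.indicator_mem_ker C₂ h₂
  have hfr := G.finrank_ker_le_one hgle
  obtain ⟨v, hv⟩ := finrank_le_one_iff.1 hfr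
  set u₁ : LinearMap.ker G.bnd := ⟨_, hk₁⟩ with hu₁
  set u₂ : LinearMap.ker G.bnd := ⟨_, hk₂⟩ with hu₂
  obtain ⟨c₁, hc₁⟩ := hv u₁
  obtain ⟨c₂, hc₂⟩ := hv u₂
  have hcn₁ : c₁ = 1 := by
    rcases zmod2_cases c₁ with h | h
    · exfalso; apply hne₁
      have : u₁ = 0 := by rw [← hc₁, h, zero_smul]
      exact congrArg Subtype.val this
    · exact h
  have hcn₂ : c₂ = 1 := by
    rcases zmod2_cases c₂ with h | h
    · exfalso; apply hne₂
      have : u₂ = 0 := by rw [← hc₂, h, zero_smul]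
      exact congrArg Subtype.val this
    · exact h
  have : u₁ = u₂ := by rw [← hc₁, ← hc₂, hcn₁, hcn₂]
  have hval : (fun e => if e ∈ C₁ then (1 : ZMod 2) else 0) =
      (fun e => if e ∈ C₂ then (1 : ZMod 2) else 0) := congrArg Subtype.val this
  ext e
  have he := congrFun hval e
  by_cases h1 : e ∈ C₁ <;> by_cases h2 : e ∈ C₂ <;> simp_all

end Multigraph
section PermFix

variable {α : Type} (p : Equiv.Perm α) {x : α}

lemma perm_pow_fix (h : p x = x) (n : ℕ) : (p ^ n) x = x := by
  induction n with
  | zero => rfl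
  | succ n ih => rw [pow_succ, Equiv.Perm.mul_apply, h, ih]

lemma perm_inv_fix (h : p x = x) : p⁻¹ x = x := by
  conv_lhs => rw [← h]
  exact p.symm_apply_apply x

lemma perm_zpow_fix (h : p x = x) (k : ℤ) : (p ^ k) x = x := by
  cases k with
  | ofNat n => rw [Int.ofNat_eq_coe, zpow_natCast]; exact perm_pow_fix p h n
  | negSucc n =>
    rw [zpow_negSucc]
    exact perm_inv_fix _ (perm_pow_fix p h (n + 1))

end PermFix

namespace GraphAction

variable {Γ : Type} [Group Γ] {G : Multigraph}

lemma finite (A : GraphAction Γ G) : Finite Γ := by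
  let f : Γ → Equiv.Perm G.V × Equiv.Perm G.E := fun γ => (A.actV γ, A.actE γ)
  have hinj : Function.Injective f := by
    intro γ δ h
    have h1 : A.actV γ = A.actV δ := congrArg Prod.fst h
    have h2 : A.actE γ = A.actE δ := congrArg Prod.snd h
    have h3 : γ * δ⁻¹ = 1 := by
      refine A.faithful _ (fun x => ?_) (fun e => ?_)
      · rw [map_mul, map_inv, Equiv.Perm.mul_apply, h2] at *
        rw [h1]
        exact (A.actV δ).apply_symm_apply x
      · rw [map_mul, map_inv, Equiv.Perm.mul_apply, h2]
        exact (A.actE δ).apply_symm_apply e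
    rw [mul_inv_eq_one] at h3
    exact h3
  exact Finite.of_injective f hinj

variable (A : GraphAction Γ G)

lemma vrel_refl (Δ : Subgroup Γ) (x : G.V) : A.vrel Δ x x :=
  ⟨1, Δ.one_mem, by simp⟩

lemma erel_refl (Δ : Subgroup Γ) (e : G.E) : A.erel Δ e e :=
  ⟨1, Δ.one_mem, by simp⟩

/-- If `γ` fixes an edge and one of its endpoints, it fixes the other endpoint. -/
lemma fix_other_end {γ : Γ} {f : G.E} {a b : G.V} (hf : A.actE γ f = f)
    (hab : G.ends f = s(a, b)) (hne : a ≠ b) (ha : A.actV γ a = a) :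
    A.actV γ b = b := by
  have hmap : s(A.actV γ a, A.actV γ b) = s(a, b) := by
    rw [← Sym2.map_pair_eq, ← hab, ← A.ends_map, hf, hab]
  rcases Sym2.eq_iff.1 hmap with ⟨h1, h2⟩ | ⟨h1, h2⟩
  · exact h2
  · rw [ha] at h1
    exact absurd h1 hne

/-- If `γ` fixes a nonvertical edge, it fixes both endpoints. -/
lemma fix_ends_of_nonvert {γ : Γ} {f : G.E} (hf : A.actE γ f = f)
    (hvert : ¬ A.Vertical ⊤ f) : ∀ v ∈ G.ends f, A.actV γ v = v := by
  obtain ⟨x, y, hxy, he⟩ := G.exists_ends f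
  have hmap : s(A.actV γ x, A.actV γ y) = s(x, y) := by
    rw [← Sym2.map_pair_eq, ← he, ← A.ends_map, hf, he]
  rcases Sym2.eq_iff.1 hmap with ⟨h1, h2⟩ | ⟨h1, h2⟩
  · intro v hv
    rcases Sym2.mem_iff.1 (he ▸ hv) with rfl | rfl
    · exact h1
    · exact h2
  · exact absurd ⟨x, y, he, ⟨γ, Subgroup.mem_top γ, h1⟩⟩ hvert

/-- Lemma A: the stabilizer of a non-vertical edge is trivial. -/
theorem stab_horiz_trivial (hA : A.ActsHarmonically) (e₀ : G.E)
    (he₀ : ¬ A.Vertical ⊤ e₀) (γ : Γ) (hγ : A.actE γ e₀ = e₀) : γ = 1 := by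
  classical
  set Δ := Subgroup.zpowers γ with hΔ
  have hγΔ : γ ∈ Δ := Subgroup.mem_zpowers γ
  have hΔV : ∀ {w : G.V}, A.actV γ w = w → ∀ δ ∈ Δ, A.actV δ w = w := by
    intro w hw δ hδ
    obtain ⟨k, rfl⟩ := Subgroup.mem_zpowers_iff.1 hδ
    rw [map_zpow]
    exact perm_zpow_fix _ hw k
  have hΔE : ∀ {f : G.E}, A.actE γ f = f → ∀ δ ∈ Δ, A.actE δ f = f := by
    intro f hf δ hδ
    obtain ⟨k, rfl⟩ := Subgroup.mem_zpowers_iff.1 hδ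
    rw [map_zpow]
    exact perm_zpow_fix _ hf k
  -- key local step
  have key : ∀ w : G.V, A.actV γ w = w → ∀ f : G.E, A.actE γ f = f → w ∈ G.ends f →
      ∀ h : G.E, w ∈ G.ends h → A.actE γ h = h := by
    intro w hw f hf hwf h hwh
    have hnovert : ∀ (h' : G.E), w ∈ G.ends h' → ¬ A.Vertical Δ h' := by
      rintro h' hwh' ⟨a, b, hab, δ, hδ, hδab⟩
      have hne : a ≠ b := by
        rintro rfl
        exact G.loopless h' (hab ▸ Sym2.mk_isDiag_iff.2 rfl)
      have hδw := hΔV hw δ hδ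
      rcases Sym2.mem_iff.1 (hab ▸ hwh') with rfl | rfl
      · rw [hδw] at hδab
        exact hne hδab
      · apply hne
        apply (A.actV δ).injective
        rw [hδab, hδw]
    have hharm := (hA Δ).1 w f h (hnovert f hwf) (hnovert h hwh)
      ⟨w, hwf, A.vrel_refl Δ w⟩ ⟨w, hwh, A.vrel_refl Δ w⟩
    have hcard_f : Nat.card {p : G.E // w ∈ G.ends p ∧ A.erel Δ p f} = 1 := by
      rw [Nat.card_eq_one_iff_unique]
      refine ⟨⟨?_⟩, ⟨⟨f, hwf, A.erel_refl Δ f⟩⟩⟩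
      rintro ⟨p, hp1, δ, hδ, hδp⟩ ⟨q, hq1, δ', hδ', hδq⟩
      have hp : p = f := by
        apply (A.actE δ).injective
        rw [hδp, hΔE hf δ hδ]
      have hq : q = f := by
        apply (A.actE δ').injective
        rw [hδq, hΔE hf δ' hδ']
      subst hp; subst hq; rfl
    rw [hcard_f] at hharm
    have hsub : Subsingleton {p : G.E // w ∈ G.ends p ∧ A.erel Δ p h} :=
      (Nat.card_eq_one_iff_unique.1 hharm.symm).1
    have hwinv : A.actV γ⁻¹ w = w := by
      rw [map_inv]; exact perm_inv_fix _ hw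
    have hmem1 : w ∈ G.ends (A.actE γ⁻¹ h) := by
      rw [A.ends_map]
      exact Sym2.mem_map.2 ⟨w, hwh, hwinv⟩
    have herel : A.erel Δ (A.actE γ⁻¹ h) h :=
      ⟨γ, hγΔ, by rw [map_inv]; exact (A.actE γ).apply_symm_apply h⟩
    have heq := hsub.elim (⟨h, hwh, A.erel_refl Δ h⟩ :
        {p : G.E // w ∈ G.ends p ∧ A.erel Δ p h})
      ⟨A.actE γ⁻¹ h, hmem1, herel⟩
    have heq' : h = A.actE γ⁻¹ h := congrArg Subtype.val heq
    rw [map_inv] at heq'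
    conv_lhs => rw [heq']
    exact (A.actE γ).apply_symm_apply h
  -- base point
  obtain ⟨x₀, y₀, hxy₀, hends₀⟩ := G.exists_ends e₀
  have hx₀mem : x₀ ∈ G.ends e₀ := by rw [hends₀]; exact Sym2.mem_mk_left _ _
  have hx₀ : A.actV γ x₀ = x₀ :=
    A.fix_ends_of_nonvert hγ he₀ x₀ hx₀mem
  -- propagation predicate
  set P : G.V → Prop := fun w => A.actV γ w = w ∧ ∃ f, A.actE γ f = f ∧ w ∈ G.ends f
    with hP
  have hP₀ : P x₀ := ⟨hx₀, e₀, hγ, hx₀mem⟩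
  have hstep : ∀ a b : G.V,
      (SimpleGraph.fromRel fun x y : G.V => ∃ e : G.E, G.ends e = s(x, y)).Adj a b →
      P a → P b := by
    intro a b hab hPa
    obtain ⟨ha, f, hf, haf⟩ := hPa
    rw [SimpleGraph.fromRel_adj] at hab
    obtain ⟨hne, h'⟩ := hab
    have hedge : ∃ e : G.E, G.ends e = s(a, b) := by
      rcases h' with h' | h'
      · exact h'
      · obtain ⟨e, he⟩ := h'; exact ⟨e, by rw [he, Sym2.eq_swap]⟩
    obtain ⟨h, hh⟩ := hedge
    have hamem : a ∈ G.ends h := by rw [hh]; exact Sym2.mem_mk_left _ _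
    have hfix_h : A.actE γ h = h := key a ha f hf haf h hamem
    have hb : A.actV γ b = b := A.fix_other_end hfix_h hh hne ha
    exact ⟨hb, h, hfix_h, by rw [hh]; exact Sym2.mem_mk_right _ _⟩
  have hall' : ∀ (a b : G.V)
      (p : (SimpleGraph.fromRel fun x y : G.V => ∃ e : G.E, G.ends e = s(x, y)).Walk a b),
      P a → P b := by
    intro a b p
    induction p with
    | nil => exact id
    | cons h p ih => intro hPa; exact ih (hstep _ _ h hPa)
  have hall : ∀ w : G.V, P w := by
    intro w
    obtain ⟨p⟩ := (G.connected.preconnected x₀ w : _)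
    exact hall' x₀ w p hP₀
  refine A.faithful γ (fun x => (hall x).1) (fun h => ?_)
  obtain ⟨a, b, hne, hab⟩ := G.exists_ends h
  obtain ⟨ha, f, hf, haf⟩ := hall a
  exact key a ha f hf haf h (by rw [hab]; exact Sym2.mem_mk_left _ _)

end GraphAction
section Fibers

variable {α : Type} [Fintype α]

lemma card_eq_sum_fibers (s : Setoid α) :
    Fintype.card α = ∑ q : Quotient s, Nat.card {a : α // Quotient.mk s a = q} := by
  classical
  rw [← Nat.card_eq_fintype_card,
    Nat.card_congr (Equiv.sigmaFiberEquiv (Quotient.mk s)).symm]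
  rw [Nat.card_eq_fintype_card, Fintype.card_sigma]
  refine Finset.sum_congr rfl fun q _ => ?_
  rw [Nat.card_eq_fintype_card]

end Fibers

namespace GraphAction

variable {Γ : Type} [Group Γ] {G : Multigraph} (A : GraphAction Γ G)

lemma vertical_act (γ : Γ) (e : G.E) (h : A.Vertical ⊤ e) :
    A.Vertical ⊤ (A.actE γ e) := by
  obtain ⟨a, b, hab, δ, -, hδ⟩ := h
  refine ⟨A.actV γ a, A.actV γ b, ?_, γ * δ * γ⁻¹, Subgroup.mem_top _, ?_⟩
  · rw [A.ends_map, hab, Sym2.map_pair_eq]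
  · rw [map_mul, map_mul, map_inv, Equiv.Perm.mul_apply, Equiv.Perm.mul_apply,
      Equiv.Perm.inv_def, Equiv.symm_apply_apply, hδ]

lemma vertical_act_iff (γ : Γ) (e : G.E) :
    A.Vertical ⊤ (A.actE γ e) ↔ A.Vertical ⊤ e := by
  constructor
  · intro h
    have := A.vertical_act γ⁻¹ _ h
    rwa [map_inv, Equiv.Perm.inv_def, Equiv.symm_apply_apply] at this
  · exact A.vertical_act γ e

/-- fibers of the vertex quotient: surjection from Γ based at any point of the fiber -/
lemma vfiber_surj (x : G.V) :
    Function.Surjective (fun γ : Γ =>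
      (⟨A.actV γ x, Quotient.sound ⟨γ⁻¹, Subgroup.mem_top _, by
        rw [map_inv, Equiv.Perm.inv_def, Equiv.symm_apply_apply]⟩⟩ :
        {a : G.V // Quotient.mk (A.vSetoid ⊤) a = Quotient.mk (A.vSetoid ⊤) x})) := by
  rintro ⟨a, ha⟩
  obtain ⟨δ, -, hδ⟩ := Quotient.exact ha
  refine ⟨δ⁻¹, ?_⟩
  apply Subtype.ext
  show A.actV δ⁻¹ x = a
  rw [← hδ, map_inv, Equiv.Perm.inv_def, Equiv.symm_apply_apply]

lemma vfiber_card_le (x : G.V) [Finite Γ] :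
    Nat.card {a : G.V // Quotient.mk (A.vSetoid ⊤) a = Quotient.mk (A.vSetoid ⊤) x} ≤
      Nat.card Γ :=
  Nat.card_le_card_of_surjective _ (A.vfiber_surj x)

/-- number of nonvertical edges -/
lemma card_nonvert (hA : A.ActsHarmonically) :
    Fintype.card {e : G.E // ¬ A.Vertical ⊤ e} = Nat.card (A.quotE ⊤) * Nat.card Γ := by
  classical
  haveI := A.finite
  set s := (A.eSetoid ⊤).comap (Subtype.val : {e : G.E // ¬ A.Vertical ⊤ e} → G.E) with hs
  rw [card_eq_sum_fibers s]
  have hfib : ∀ q : Quotient s, Nat.card {a // Quotient.mk s a = q} = Nat.card Γ := by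
    intro q
    set b := q.out with hb
    have hmk : Quotient.mk s b = q := q.out_eq
    have hact : ∀ γ : Γ, ¬ A.Vertical ⊤ (A.actE γ b.1) := by
      intro γ h
      exact b.2 ((A.vertical_act_iff γ b.1).1 h)
    let m : Γ → {a // Quotient.mk s a = q} := fun γ =>
      ⟨⟨A.actE γ b.1, hact γ⟩, by
        rw [← hmk]
        refine Quotient.sound ?_
        exact ⟨γ⁻¹, Subgroup.mem_top _, by rw [map_inv, Equiv.Perm.inv_def, Equiv.symm_apply_apply]⟩⟩
    have hbij : Function.Bijective m := by
      constructor
      · intro γ₁ γ₂ h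
        have h1 : A.actE γ₁ b.1 = A.actE γ₂ b.1 :=
          congrArg (fun z => (Subtype.val (Subtype.val z))) h
        have h2 : A.actE (γ₂⁻¹ * γ₁) b.1 = b.1 := by
          rw [map_mul, Equiv.Perm.mul_apply, h1, map_inv, Equiv.Perm.inv_def, Equiv.symm_apply_apply]
        have := A.stab_horiz_trivial hA b.1 b.2 _ h2
        rwa [inv_mul_eq_one, eq_comm] at this
      · rintro ⟨⟨e, hnv⟩, hq⟩
        have : s.r ⟨e, hnv⟩ b := Quotient.exact (hq.trans hmk.symm)
        obtain ⟨δ, -, hδ⟩ := this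
        refine ⟨δ⁻¹, ?_⟩
        apply Subtype.ext
        apply Subtype.ext
        show A.actE δ⁻¹ b.1 = e
        have hδ' : A.actE δ e = b.1 := hδ
        rw [← hδ', map_inv, Equiv.Perm.inv_def, Equiv.symm_apply_apply]
    exact (Nat.card_eq_of_bijective m hbij).symm
  rw [Finset.sum_congr rfl fun q _ => hfib q, Finset.sum_const, Finset.card_univ,
    smul_eq_mul]
  have h1 : Nat.card (A.quotE ⊤) = Fintype.card (Quotient s) := Nat.card_eq_fintype_card
  rw [h1]

theorem no_vertical_and_free (hA : A.ActsHarmonically)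
    (hg : Fintype.card G.E = Fintype.card G.V)
    (hq : Nat.card (A.quotE ⊤) = Nat.card (A.quotV ⊤)) :
    (∀ e : G.E, ¬ A.Vertical ⊤ e) ∧ (∀ (γ : Γ) (x : G.V), A.actV γ x = x → γ = 1) := by
  classical
  haveI := A.finite
  have hEsplit : Fintype.card {e : G.E // ¬ A.Vertical ⊤ e} +
      Fintype.card {e : G.E // A.Vertical ⊤ e} = Fintype.card G.E := by
    rw [← Fintype.card_sum]
    refine Fintype.card_congr ?_
    exact (Equiv.sumComm _ _).trans (Equiv.sumCompl _)
  have hEh := A.card_nonvert hA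
  have hVsum := card_eq_sum_fibers (A.vSetoid ⊤)
  rw [hq] at hEh
  have hVle : Fintype.card G.V ≤ Nat.card (A.quotV ⊤) * Nat.card Γ := by
    rw [hVsum]
    calc ∑ q : A.quotV ⊤, Nat.card {a : G.V // Quotient.mk (A.vSetoid ⊤) a = q}
        ≤ ∑ _q : A.quotV ⊤, Nat.card Γ := by
          refine Finset.sum_le_sum fun q _ => ?_
          have : Quotient.mk (A.vSetoid ⊤) q.out = q := q.out_eq
          rw [← this]
          exact A.vfiber_card_le q.out
      _ = Nat.card (A.quotV ⊤) * Nat.card Γ := by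
          rw [Finset.sum_const, Finset.card_univ, smul_eq_mul]
          exact congrArg (· * Nat.card Γ) Nat.card_eq_fintype_card.symm
  have hEv0 : Fintype.card {e : G.E // A.Vertical ⊤ e} = 0 ∧
      Fintype.card G.V = Nat.card (A.quotV ⊤) * Nat.card Γ := by
    constructor <;> omega
  obtain ⟨hEv0, hVeq⟩ := hEv0
  constructor
  · intro e he
    exact (Fintype.card_eq_zero_iff.1 hEv0).elim' ⟨e, he⟩
  · -- all fibers have size exactly n
    have hfibn : ∀ q : A.quotV ⊤,
        Nat.card {a : G.V // Quotient.mk (A.vSetoid ⊤) a = q} = Nat.card Γ := by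
      have hsum2 : ∑ q : A.quotV ⊤, Nat.card {a : G.V // Quotient.mk (A.vSetoid ⊤) a = q}
          = ∑ _q : A.quotV ⊤, Nat.card Γ := by
        rw [← hVsum, hVeq, Finset.sum_const, Finset.card_univ, smul_eq_mul]
        exact congrArg (· * Nat.card Γ) Nat.card_eq_fintype_card
      have hle : ∀ q ∈ Finset.univ, Nat.card {a : G.V // Quotient.mk (A.vSetoid ⊤) a = q} ≤ Nat.card Γ := by
        intro q _
        have : Quotient.mk (A.vSetoid ⊤) q.out = q := q.out_eq
        rw [← this]
        exact A.vfiber_card_le q.out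
      intro q
      exact (Finset.sum_eq_sum_iff_of_le hle).1 hsum2 q (Finset.mem_univ q)
    intro γ x hγx
    set q := Quotient.mk (A.vSetoid ⊤) x with hq'
    let m : Γ → {a : G.V // Quotient.mk (A.vSetoid ⊤) a = q} := fun δ =>
      ⟨A.actV δ x, Quotient.sound ⟨δ⁻¹, Subgroup.mem_top _, by
        rw [map_inv, Equiv.Perm.inv_def, Equiv.symm_apply_apply]⟩⟩
    have hsurj : Function.Surjective m := A.vfiber_surj x
    haveI : Fintype Γ := Fintype.ofFinite Γ
    have hcards : Fintype.card Γ = Fintype.card {a : G.V // Quotient.mk (A.vSetoid ⊤) a = q} := by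
      rw [← Nat.card_eq_fintype_card, ← Nat.card_eq_fintype_card]
      exact (hfibn q).symm
    have hinj : Function.Injective m :=
      ((Fintype.bijective_iff_surjective_and_card m).2 ⟨hsurj, hcards⟩).1
    have : m γ = m 1 := by
      apply Subtype.ext
      show A.actV γ x = A.actV 1 x
      rw [hγx, map_one]
      rfl
    exact hinj this

end GraphAction
namespace GraphAction

variable {Γ : Type} [Group Γ] {G : Multigraph} (A : GraphAction Γ G)

theorem ram_top_zero (hnv : ∀ e : G.E, ¬ A.Vertical ⊤ e)
    (hfree : ∀ (γ : Γ) (x : G.V), A.actV γ x = x → γ = 1) : A.ram ⊤ = 0 := by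
  have hr : ∀ y : A.quotV ⊤, A.r ⊤ y = 1 := by
    intro y
    rw [r, stabOrder, Nat.card_eq_one_iff_unique]
    constructor
    · constructor
      rintro ⟨γ₁, -, h₁⟩ ⟨γ₂, -, h₂⟩
      apply Subtype.ext
      show γ₁ = γ₂
      rw [hfree γ₁ _ h₁, hfree γ₂ _ h₂]
    · exact ⟨⟨1, Subgroup.mem_top 1, by rw [map_one]; rfl⟩⟩
  have hw : ∀ y : A.quotV ⊤, A.w ⊤ y = 0 := by
    intro y
    rw [w, vertMult]
    haveI : IsEmpty {e : G.E // Quotient.out y ∈ G.ends e ∧ A.Vertical ⊤ e} :=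
      ⟨fun e => hnv e.1 e.2.2⟩
    rw [Nat.card_of_isEmpty]
    simp
  rw [ram]
  have hz : ∀ y : A.quotV ⊤, (2 * (1 - 1 / (A.r ⊤ y : ℚ)) + (A.w ⊤ y : ℚ)) = 0 := by
    intro y; rw [hr y, hw y]; norm_num
  rw [finsum_congr hz, finsum_zero]

lemma sym2_cancel {α : Type} {a u v : α} (h : s(a, u) = s(a, v)) : u = v := by
  rcases Sym2.eq_iff.1 h with ⟨-, h2⟩ | ⟨h1, h2⟩
  · exact h2
  · rw [h2, ← h1]

/-- the image of a cycle set is a cycle set; by uniqueness it is invariant -/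
lemma cycle_invariant (hgle : Fintype.card G.E ≤ Fintype.card G.V)
    (C : Set G.E) (hC : G.IsCycleSet C) (γ : Γ) (e : G.E) (he : e ∈ C) :
    A.actE γ e ∈ C := by
  classical
  set C' : Set G.E := {f | A.actE γ⁻¹ f ∈ C} with hC'
  have hmem : A.actE γ e ∈ C' := by
    show A.actE γ⁻¹ (A.actE γ e) ∈ C
    rw [map_inv, Equiv.Perm.inv_def, Equiv.symm_apply_apply]
    exact he
  have hcs : G.IsCycleSet C' := by
    constructor
    · exact ⟨A.actE γ e, hmem⟩
    · intro x
      have hequiv : {f : G.E // f ∈ C' ∧ x ∈ G.ends f} ≃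
          {f : G.E // f ∈ C ∧ A.actV γ⁻¹ x ∈ G.ends f} := by
        refine ⟨fun p => ⟨A.actE γ⁻¹ p.1, p.2.1, ?_⟩,
          fun p => ⟨A.actE γ p.1, ?_, ?_⟩, ?_, ?_⟩
        · rw [A.ends_map]
          exact Sym2.mem_map.2 ⟨x, p.2.2, rfl⟩
        · show A.actE γ⁻¹ (A.actE γ p.1) ∈ C
          rw [map_inv, Equiv.Perm.inv_def, Equiv.symm_apply_apply]
          exact p.2.1
        · rw [A.ends_map]
          refine Sym2.mem_map.2 ⟨A.actV γ⁻¹ x, p.2.2, ?_⟩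
          rw [map_inv, Equiv.Perm.inv_def, Equiv.apply_symm_apply]
        · rintro ⟨f, h1, h2⟩
          apply Subtype.ext
          show A.actE γ (A.actE γ⁻¹ f) = f
          rw [map_inv, Equiv.Perm.inv_def, Equiv.apply_symm_apply]
        · rintro ⟨f, h1, h2⟩
          apply Subtype.ext
          show A.actE γ⁻¹ (A.actE γ f) = f
          rw [map_inv, Equiv.Perm.inv_def, Equiv.symm_apply_apply]
      rw [Nat.card_congr hequiv]
      exact hC.2 (A.actV γ⁻¹ x)
  rw [G.cycleSet_unique hgle C' C hcs hC] at hmem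
  exact hmem

end GraphAction
namespace GraphAction

variable {Γ : Type} [Group Γ] {G : Multigraph} (A : GraphAction Γ G)

theorem cycle_master
    (hnv : ∀ e : G.E, ¬ A.Vertical ⊤ e)
    (hfree : ∀ (γ : Γ) (x : G.V), A.actV γ x = x → γ = 1)
    (hgle : Fintype.card G.E ≤ Fintype.card G.V)
    (C : Set G.E) (hC : G.IsCycleSet C)
    (hinv : ∀ (γ : Γ) (e : G.E), e ∈ C → A.actE γ e ∈ C) :
    IsCyclic Γ ∧ Nat.card Γ ∣ Nat.card {x : G.V // ∃ e ∈ C, x ∈ G.ends e} ∧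
      Nat.card Γ < Nat.card {x : G.V // ∃ e ∈ C, x ∈ G.ends e} := by
  classical
  haveI := A.finite
  haveI : Fintype Γ := Fintype.ofFinite Γ
  -- every vertex of the cycle has exactly two cycle edges
  have htwo : ∀ (x : G.V) (e : G.E), e ∈ C → x ∈ G.ends e →
      ∃ f : G.E, (f ∈ C ∧ x ∈ G.ends f) ∧ f ≠ e ∧
        ∀ g : G.E, g ∈ C → x ∈ G.ends g → g = e ∨ g = f := by
    intro x e he hx
    have hpos : Nat.card {f : G.E // f ∈ C ∧ x ∈ G.ends f} ≠ 0 := by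
      have : 0 < Nat.card {f : G.E // f ∈ C ∧ x ∈ G.ends f} :=
        Nat.card_pos_iff.2 ⟨⟨⟨e, he, hx⟩⟩, inferInstance⟩
      omega
    have hcard : Nat.card {f : G.E // f ∈ C ∧ x ∈ G.ends f} = 2 :=
      (hC.2 x).resolve_left hpos
    obtain ⟨a, b, hab, huniv⟩ := Nat.card_eq_two_iff.1 hcard
    have hmem : ∀ g : {f : G.E // f ∈ C ∧ x ∈ G.ends f}, g = a ∨ g = b := by
      intro g
      have : g ∈ ({a, b} : Set {f : G.E // f ∈ C ∧ x ∈ G.ends f}) := by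
        rw [huniv]; trivial
      simpa using this
    rcases hmem ⟨e, he, hx⟩ with h | h
    · refine ⟨b.1, b.2, ?_, ?_⟩
      · intro hbe
        apply hab
        rw [← h]
        exact (Subtype.ext hbe).symm
      · intro g hg hxg
        rcases hmem ⟨g, hg, hxg⟩ with h' | h'
        · left; rw [← h] at h'; exact congrArg Subtype.val h'
        · right; exact congrArg Subtype.val h'
    · refine ⟨a.1, a.2, ?_, ?_⟩
      · intro hae
        exact hab ((Subtype.ext hae).trans h)
      · intro g hg hxg
        rcases hmem ⟨g, hg, hxg⟩ with h' | h'
        · right; exact congrArg Subtype.val h'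
        · left; rw [← h] at h'; exact congrArg Subtype.val h'
  -- flags
  set D := {p : G.V × G.E // p.2 ∈ C ∧ p.1 ∈ G.ends p.2} with hD
  let oE : D → G.E := fun d => Classical.choose (htwo d.1.1 d.1.2 d.2.1 d.2.2)
  have hoE : ∀ d : D, ((oE d ∈ C ∧ d.1.1 ∈ G.ends (oE d)) ∧ oE d ≠ d.1.2 ∧
      ∀ g : G.E, g ∈ C → d.1.1 ∈ G.ends g → g = d.1.2 ∨ g = oE d) :=
    fun d => Classical.choose_spec (htwo d.1.1 d.1.2 d.2.1 d.2.2)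
  let σf : D → D := fun d => ⟨(d.1.1, oE d), (hoE d).1.1, (hoE d).1.2⟩
  let τf : D → D := fun d => ⟨(Sym2.Mem.other d.2.2, d.1.2), d.2.1, Sym2.other_mem d.2.2⟩
  have dext : ∀ (d d' : D), d.1.1 = d'.1.1 → d.1.2 = d'.1.2 → d = d' := by
    rintro ⟨⟨x, e⟩, h⟩ ⟨⟨x', e'⟩, h'⟩ h1 h2
    apply Subtype.ext
    exact Prod.ext h1 h2
  have hoE_unique : ∀ (d : D) (g : G.E), g ∈ C → d.1.1 ∈ G.ends g → g ≠ d.1.2 →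
      g = oE d := by
    intro d g hg hxg hne
    rcases (hoE d).2.2 g hg hxg with h | h
    · exact absurd h hne
    · exact h
  have hother : ∀ (e : G.E) (a : G.V) (h : a ∈ G.ends e)
      (hb : Sym2.Mem.other h ∈ G.ends e), Sym2.Mem.other hb = a := by
    intro e a h hb
    have h1 : s(a, Sym2.Mem.other h) = G.ends e := Sym2.other_spec h
    have h2 : s(Sym2.Mem.other h, Sym2.Mem.other hb) = G.ends e := Sym2.other_spec hb
    have h3 := h2.trans h1.symm
    rcases Sym2.eq_iff.1 h3 with ⟨hx, hy⟩ | ⟨hx, hy⟩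
    · exact absurd hx (Sym2.other_ne (G.loopless e) h)
    · exact hy
  have hσinvol : Function.Involutive σf := by
    intro d
    refine dext _ _ rfl ?_
    show oE (σf d) = d.1.2
    rcases (hoE (σf d)).2.2 d.1.2 d.2.1 d.2.2 with h | h
    · exact absurd h.symm (hoE d).2.1
    · exact h.symm
  have hτinvol : Function.Involutive τf := by
    intro d
    refine dext _ _ ?_ rfl
    show Sym2.Mem.other (Sym2.other_mem d.2.2) = d.1.1
    exact hother _ _ d.2.2 _
  set σP : Equiv.Perm D := Function.Involutive.toPerm σf hσinvol with hσP
  set τP : Equiv.Perm D := Function.Involutive.toPerm τf hτinvol with hτP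
  have hσapp : ∀ d : D, σP d = σf d := fun d => rfl
  have hτapp : ∀ d : D, τP d = τf d := fun d => rfl
  set π : Equiv.Perm D := σP * τP with hπ
  have hσσ : σP * σP = 1 := by ext d : 1; exact hσinvol d
  have hττ : τP * τP = 1 := by ext d : 1; exact hτinvol d
  have hτPinv : τP⁻¹ = τP := inv_eq_of_mul_eq_one_right hττ
  have hσPinv : σP⁻¹ = σP := inv_eq_of_mul_eq_one_right hσσ
  have hπinv : π⁻¹ = τP * σP := by rw [hπ, mul_inv_rev, hτPinv, hσPinv]
  have hπτσ : π * τP = σP := by rw [hπ, mul_assoc, hττ, mul_one]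
  have hτπ : τP * π = π⁻¹ * τP := by
    rw [hπinv, hπ, mul_assoc]
  have hconj : ∀ s : ℕ, τP * π ^ s = (π ^ s)⁻¹ * τP := by
    intro s
    induction s with
    | zero => simp
    | succ s ih =>
      rw [pow_succ, ← mul_assoc, ih, mul_assoc, hτπ, ← mul_assoc, ← mul_inv_rev,
        ← pow_succ', ← pow_succ]
  have hτne : ∀ d : D, τP d ≠ d := by
    intro d h
    have h1 : Sym2.Mem.other d.2.2 = d.1.1 := congrArg (fun z : D => z.1.1) h
    exact Sym2.other_ne (G.loopless d.1.2) d.2.2 h1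
  have hσne : ∀ d : D, σP d ≠ d := by
    intro d h
    have h1 : oE d = d.1.2 := congrArg (fun z : D => z.1.2) h
    exact (hoE d).2.1 h1
  -- no flag is reversed by a power of the rotation
  have hnoflip : ∀ (d : D) (t : ℕ), (π ^ t) d ≠ τP d := by
    intro d t h
    rcases Nat.even_or_odd t with ⟨s, hs⟩ | ⟨s, hs⟩
    · apply hτne ((π ^ s) d)
      have h1 : τP ((π ^ s) d) = (π ^ s)⁻¹ (τP d) := by
        rw [← Equiv.Perm.mul_apply, ← Equiv.Perm.mul_apply, hconj s]
      rw [h1, ← h, ← Equiv.Perm.mul_apply]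
      have h2 : (π ^ s)⁻¹ * π ^ t = π ^ s := by
        rw [hs, pow_add, inv_mul_cancel_left]
      rw [h2]
    · apply hσne ((π ^ (s + 1)) d)
      have h1 : τP ((π ^ (s + 1)) d) = (π ^ (s + 1))⁻¹ (τP d) := by
        rw [← Equiv.Perm.mul_apply, ← Equiv.Perm.mul_apply, hconj (s + 1)]
      have h2 : σP ((π ^ (s + 1)) d) = π ((π ^ (s + 1))⁻¹ (τP d)) := by
        rw [← hπτσ, Equiv.Perm.mul_apply, h1]
      rw [h2, ← h, ← Equiv.Perm.mul_apply, ← Equiv.Perm.mul_apply]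
      have h3 : π * (π ^ (s + 1))⁻¹ * π ^ t = π ^ (s + 1) := by
        have ht : t = (s + 1) + s := by omega
        have hts : π ^ t = π ^ (s + 1) * π ^ s := by rw [ht, pow_add]
        rw [hts, mul_assoc, inv_mul_cancel_left, ← pow_succ']
      rw [h3]
  -- the action of Γ on flags
  let gact : Γ → D → D := fun γ d => ⟨(A.actV γ d.1.1, A.actE γ d.1.2),
    hinv γ d.1.2 d.2.1, by rw [A.ends_map]; exact Sym2.mem_map.2 ⟨d.1.1, d.2.2, rfl⟩⟩
  have hgact_fst : ∀ (γ : Γ) (d : D), (gact γ d).1.1 = A.actV γ d.1.1 := fun _ _ => rfl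
  have hgact_snd : ∀ (γ : Γ) (d : D), (gact γ d).1.2 = A.actE γ d.1.2 := fun _ _ => rfl
  have hgact_mul : ∀ (γ δ : Γ) (d : D), gact (γ * δ) d = gact γ (gact δ d) := by
    intro γ δ d
    refine dext _ _ ?_ ?_
    · show A.actV (γ * δ) d.1.1 = A.actV γ (A.actV δ d.1.1)
      rw [map_mul]; rfl
    · show A.actE (γ * δ) d.1.2 = A.actE γ (A.actE δ d.1.2)
      rw [map_mul]; rfl
  have hgact_one : ∀ d : D, gact 1 d = d := by
    intro d
    refine dext _ _ ?_ ?_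
    · show A.actV 1 d.1.1 = d.1.1
      rw [map_one]; rfl
    · show A.actE 1 d.1.2 = d.1.2
      rw [map_one]; rfl
  have hgτ : ∀ (γ : Γ) (d : D), gact γ (τP d) = τP (gact γ d) := by
    intro γ d
    refine dext _ _ ?_ rfl
    show A.actV γ (Sym2.Mem.other d.2.2) = Sym2.Mem.other (gact γ d).2.2
    have h1 : s((gact γ d).1.1, Sym2.Mem.other (gact γ d).2.2) =
        G.ends (gact γ d).1.2 := Sym2.other_spec _
    have h2 : s((gact γ d).1.1, A.actV γ (Sym2.Mem.other d.2.2)) =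
        G.ends (gact γ d).1.2 := by
      show s(A.actV γ d.1.1, A.actV γ (Sym2.Mem.other d.2.2)) = G.ends (A.actE γ d.1.2)
      rw [A.ends_map]
      exact (Sym2.map_pair_eq _ _ _).symm.trans
        (congrArg (Sym2.map (A.actV γ)) (Sym2.other_spec d.2.2))
    exact sym2_cancel (h2.trans h1.symm)
  have hgσ : ∀ (γ : Γ) (d : D), gact γ (σP d) = σP (gact γ d) := by
    intro γ d
    refine dext _ _ rfl ?_
    show A.actE γ (oE d) = oE (gact γ d)
    apply hoE_unique (gact γ d)
    · exact hinv γ _ (hoE d).1.1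
    · show A.actV γ d.1.1 ∈ G.ends (A.actE γ (oE d))
      rw [A.ends_map]
      exact Sym2.mem_map.2 ⟨d.1.1, (hoE d).1.2, rfl⟩
    · intro heq
      exact (hoE d).2.1 ((A.actE γ).injective heq)
  have hgπ : ∀ (γ : Γ) (d : D), gact γ (π d) = π (gact γ d) := by
    intro γ d
    have h1 : π d = σP (τP d) := rfl
    have h2 : π (gact γ d) = σP (τP (gact γ d)) := rfl
    rw [h1, h2, hgσ, hgτ]
  have hgπpow : ∀ (γ : Γ) (k : ℕ) (d : D), gact γ ((π ^ k) d) = (π ^ k) (gact γ d) := by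
    intro γ k
    induction k with
    | zero => intro d; rfl
    | succ k ih =>
      intro d
      have h1 : (π ^ (k + 1)) d = (π ^ k) (π d) := by
        rw [pow_succ, Equiv.Perm.mul_apply]
      have h2 : (π ^ (k + 1)) (gact γ d) = (π ^ k) (π (gact γ d)) := by
        rw [pow_succ, Equiv.Perm.mul_apply]
      rw [h1, h2, ih, hgπ]
  have hgfree : ∀ (γ : Γ) (d : D), gact γ d = d → γ = 1 := by
    intro γ d h
    exact hfree γ d.1.1 (congrArg (fun z : D => z.1.1) h)
  -- base flag
  obtain ⟨e₀, he₀⟩ := hC.1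
  obtain ⟨x₀, y₀', hxy₀, hends₀⟩ := G.exists_ends e₀
  have hx₀ : x₀ ∈ G.ends e₀ := by rw [hends₀]; exact Sym2.mem_mk_left _ _
  set d₀ : D := ⟨(x₀, e₀), he₀, hx₀⟩ with hd₀
  set M := orderOf π with hM'
  have hM : 0 < M := orderOf_pos π
  have hpowM : ∀ (k : ℕ) (d : D), (π ^ (k * M)) d = d := by
    intro k d
    rw [mul_comm, pow_mul, pow_orderOf_eq_one, one_pow]
    rfl
  have hpow_inv : ∀ k : ℕ, (π ^ k)⁻¹ = π ^ (k * M - k) := by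
    intro k
    have h1 : π ^ (k * M - k) * π ^ k = 1 := by
      rw [← pow_add, Nat.sub_add_cancel (Nat.le_mul_of_pos_right k hM), mul_comm,
        pow_mul, pow_orderOf_eq_one, one_pow]
    exact (eq_inv_of_mul_eq_one_left h1).symm
  -- the closed orbit
  set O : Set D := Set.range (fun k : ℕ => (π ^ k) d₀) with hO
  set T : Set D := Set.range (fun k : ℕ => (π ^ k) (τP d₀)) with hT
  have hclπ : ∀ d ∈ O ∪ T, π d ∈ O ∪ T := by
    rintro d (⟨k, hk⟩ | ⟨k, hk⟩)
    · have hk' : (π ^ k) d₀ = d := hk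
      left
      refine ⟨k + 1, ?_⟩
      show (π ^ (k + 1)) d₀ = π d
      rw [← hk', pow_succ', Equiv.Perm.mul_apply]
    · have hk' : (π ^ k) (τP d₀) = d := hk
      right
      refine ⟨k + 1, ?_⟩
      show (π ^ (k + 1)) (τP d₀) = π d
      rw [← hk', pow_succ', Equiv.Perm.mul_apply]
  have hconj_app : ∀ (s : ℕ) (d : D), τP ((π ^ s) d) = (π ^ s)⁻¹ (τP d) := by
    intro s d
    rw [← Equiv.Perm.mul_apply, ← Equiv.Perm.mul_apply, hconj s]
  have hclτ : ∀ d ∈ O ∪ T, τP d ∈ O ∪ T := by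
    rintro d (⟨k, hk⟩ | ⟨k, hk⟩)
    · have hk' : (π ^ k) d₀ = d := hk
      right
      refine ⟨k * M - k, ?_⟩
      show (π ^ (k * M - k)) (τP d₀) = τP d
      rw [← hpow_inv k, ← hconj_app, hk']
    · have hk' : (π ^ k) (τP d₀) = d := hk
      left
      refine ⟨k * M - k, ?_⟩
      show (π ^ (k * M - k)) d₀ = τP d
      have h1 : (π ^ (k * M - k)) (τP (τP d₀)) = τP d := by
        rw [← hpow_inv k, ← hconj_app, hk']
      have hττd : τP (τP d₀) = d₀ := hτinvol d₀
      rw [hττd] at h1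
      exact h1
  -- transport of flags along an edge
  have hflag : ∀ (d : D), d ∈ O ∪ T → ∀ (x : G.V) (hx : x ∈ G.ends d.1.2),
      (⟨(x, d.1.2), d.2.1, hx⟩ : D) ∈ O ∪ T := by
    intro d hd x hx
    by_cases hxx : x = d.1.1
    · have : (⟨(x, d.1.2), d.2.1, hx⟩ : D) = d := dext _ _ hxx rfl
      rw [this]; exact hd
    · have hoth : Sym2.Mem.other d.2.2 = x := by
        have hsp : s(d.1.1, Sym2.Mem.other d.2.2) = G.ends d.1.2 := Sym2.other_spec _
        have hx' : x ∈ s(d.1.1, Sym2.Mem.other d.2.2) := by rw [hsp]; exact hx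
        rcases Sym2.mem_iff.1 hx' with h | h
        · exact absurd h hxx
        · exact h.symm
      have heq : (⟨(x, d.1.2), d.2.1, hx⟩ : D) = τP d := dext _ _ hoth.symm rfl
      rw [heq]
      exact hclτ d hd
  -- C₀ is a cycle set, hence equals C
  set C₀ : Set G.E :=
    {e | ∃ (x : G.V) (he : e ∈ C) (hx : x ∈ G.ends e), (⟨(x, e), he, hx⟩ : D) ∈ O ∪ T}
    with hC₀def
  have hd₀O : d₀ ∈ O ∪ T := Or.inl ⟨0, by show (π ^ 0) d₀ = d₀; rw [pow_zero]; rfl⟩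
  have hC₀cs : G.IsCycleSet C₀ := by
    constructor
    · exact ⟨e₀, x₀, he₀, hx₀, hd₀O⟩
    · intro x
      by_cases hex : ∃ e : G.E, e ∈ C₀ ∧ x ∈ G.ends e
      · right
        obtain ⟨e, heC₀, hxe⟩ := hex
        obtain ⟨z, he, hz, hd⟩ := heC₀
        have hflag_xe : (⟨(x, e), he, hxe⟩ : D) ∈ O ∪ T :=
          hflag ⟨(z, e), he, hz⟩ hd x hxe
        set dxe : D := ⟨(x, e), he, hxe⟩ with hdxe
        have hσd : σP dxe ∈ O ∪ T := by
          have h1 : σP dxe = π (τP dxe) := by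
            rw [← hπτσ, Equiv.Perm.mul_apply]
          rw [h1]
          exact hclπ _ (hclτ _ hflag_xe)
        have hsetiff : ∀ f : G.E, (f ∈ C₀ ∧ x ∈ G.ends f) ↔ (f ∈ C ∧ x ∈ G.ends f) := by
          intro f
          constructor
          · rintro ⟨hf, hxf⟩
            obtain ⟨z', hf', -, -⟩ := hf
            exact ⟨hf', hxf⟩
          · rintro ⟨hf, hxf⟩
            refine ⟨?_, hxf⟩
            rcases (hoE dxe).2.2 f hf hxf with h | h
            · subst h
              exact ⟨x, he, hxe, hflag_xe⟩
            · subst h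
              refine ⟨x, (hoE dxe).1.1, (hoE dxe).1.2, ?_⟩
              have : (⟨(x, oE dxe), (hoE dxe).1.1, (hoE dxe).1.2⟩ : D) = σP dxe :=
                dext _ _ rfl rfl
              rw [this]
              exact hσd
        have hcc : Nat.card {f : G.E // f ∈ C₀ ∧ x ∈ G.ends f} =
            Nat.card {f : G.E // f ∈ C ∧ x ∈ G.ends f} :=
          Nat.card_congr (Equiv.subtypeEquivRight hsetiff)
        rw [hcc]
        refine (hC.2 x).resolve_left ?_
        have : 0 < Nat.card {f : G.E // f ∈ C ∧ x ∈ G.ends f} :=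
          Nat.card_pos_iff.2 ⟨⟨⟨e, (hsetiff e).1 ⟨⟨z, he, hz, hd⟩, hxe⟩⟩⟩, inferInstance⟩
        omega
      · left
        haveI : IsEmpty {f : G.E // f ∈ C₀ ∧ x ∈ G.ends f} :=
          ⟨fun f => hex ⟨f.1, f.2.1, f.2.2⟩⟩
        exact Nat.card_of_isEmpty
  have hC₀C : C₀ = C := G.cycleSet_unique hgle C₀ C hC₀cs hC
  have htrans : ∀ d : D, d ∈ O ∪ T := by
    intro d
    have : d.1.2 ∈ C₀ := by rw [hC₀C]; exact d.2.1
    obtain ⟨z, he, hz, hd⟩ := this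
    have := hflag ⟨(z, d.1.2), he, hz⟩ hd d.1.1 d.2.2
    have heq : (⟨(d.1.1, d.1.2), he, d.2.2⟩ : D) = d := dext _ _ rfl rfl
    rw [heq] at this
    exact this
  -- Γ preserves the orientation: γ d₀ ∈ O
  have hγO : ∀ γ : Γ, ∃ k : ℕ, (π ^ k) d₀ = gact γ d₀ := by
    intro γ
    rcases htrans (gact γ d₀) with ⟨k, hk⟩ | ⟨k, hk⟩
    · exact ⟨k, hk⟩
    · exfalso
      have hk' : (π ^ k) (τP d₀) = gact γ d₀ := hk
      -- gact γ d₀ = π^k (τP d₀)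
      rcases Nat.even_or_odd k with ⟨j, hj⟩ | ⟨j, hj⟩
      · -- vertical edge contradiction
        set s := j * (M - 1) with hs
        have hdvd : 2 * s + k = (2 * j) * M := by
          have h1 : M - 1 + 1 = M := Nat.succ_pred_eq_of_pos hM
          calc 2 * s + k = 2 * (j * (M - 1)) + (j + j) := by rw [hs, hj]
            _ = (2 * j) * ((M - 1) + 1) := by ring
            _ = (2 * j) * M := by rw [h1]
        set v : D := (π ^ s) d₀ with hv
        have hgv : gact γ v = (π ^ (s + k)) (τP d₀) := by
          rw [hv, hgπpow, ← hk', ← Equiv.Perm.mul_apply, ← pow_add]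
        have hτv : τP v = (π ^ (s + k)) (τP d₀) := by
          have e2 : τP v = (π ^ s)⁻¹ (τP d₀) := by rw [hv]; exact hconj_app s d₀
          rw [e2]
          apply (π ^ s).injective
          rw [Equiv.Perm.inv_def, Equiv.apply_symm_apply, ← Equiv.Perm.mul_apply, ← pow_add]
          have hss : s + (s + k) = (2 * j) * M := by omega
          rw [hss]
          exact (hpowM _ _).symm
        have hfin : gact γ v = τP v := by rw [hgv, ← hτv]
        -- extract a vertical edge
        have hE : A.actE γ v.1.2 = v.1.2 := by
          have := congrArg (fun z : D => z.1.2) hfin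
          exact this
        have hV : A.actV γ v.1.1 = Sym2.Mem.other v.2.2 := by
          have := congrArg (fun z : D => z.1.1) hfin
          exact this
        exact hnv v.1.2 ⟨v.1.1, Sym2.Mem.other v.2.2, (Sym2.other_spec v.2.2).symm,
          γ, Subgroup.mem_top γ, hV⟩
      · -- fixed vertex contradiction
        set s := j * (M - 1) with hs
        have hdvd : 2 * s + 2 * j = (2 * j) * M := by
          have h1 : M - 1 + 1 = M := Nat.succ_pred_eq_of_pos hM
          calc 2 * s + 2 * j = 2 * (j * (M - 1)) + 2 * j := by rw [hs]
            _ = (2 * j) * ((M - 1) + 1) := by ring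
            _ = (2 * j) * M := by rw [h1]
        set v : D := (π ^ s) d₀ with hv
        have hgv : gact γ v = (π ^ (s + k)) (τP d₀) := by
          rw [hv, hgπpow, ← hk', ← Equiv.Perm.mul_apply, ← pow_add]
        have hσv : σP v = (π ^ (s + k)) (τP d₀) := by
          have e1 : σP v = π (τP v) := by rw [← hπτσ, Equiv.Perm.mul_apply]
          have e2 : τP v = (π ^ s)⁻¹ (τP d₀) := by rw [hv]; exact hconj_app s d₀
          have e3 : (π ^ s)⁻¹ (τP d₀) = (π ^ (s + 2 * j)) (τP d₀) := by
            apply (π ^ s).injective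
            rw [Equiv.Perm.inv_def, Equiv.apply_symm_apply, ← Equiv.Perm.mul_apply, ← pow_add]
            have h3 : s + (s + 2 * j) = (2 * j) * M := by omega
            rw [h3]
            exact (hpowM _ _).symm
          have e4 : s + k = (s + 2 * j) + 1 := by omega
          rw [e1, e2, e3, e4, pow_succ']
          exact (Equiv.Perm.mul_apply _ _ _).symm
        have hfin : gact γ v = σP v := by rw [hgv, ← hσv]
        have hV : A.actV γ v.1.1 = v.1.1 := congrArg (fun z : D => z.1.1) hfin
        have hγ1 : γ = 1 := hfree γ v.1.1 hV
        rw [hγ1, hgact_one d₀] at hk'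
        have hfl : (π ^ (k * M - k)) d₀ = τP d₀ := by
          rw [← hpow_inv k]
          apply (π ^ k).injective
          rw [Equiv.Perm.inv_def, Equiv.apply_symm_apply, hk']
        exact hnoflip d₀ (k * M - k) hfl
  -- the period
  set ℓ := Function.minimalPeriod (⇑π) d₀ with hℓ
  have hMiter : (⇑π)^[M] d₀ = d₀ := by
    rw [Equiv.Perm.iterate_eq_pow, pow_orderOf_eq_one]
    rfl
  have hperPts : d₀ ∈ Function.periodicPts (⇑π) := ⟨M, hM, hMiter⟩
  have hℓpos : 0 < ℓ := Function.minimalPeriod_pos_of_mem_periodicPts hperPts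
  haveI : NeZero ℓ := ⟨by omega⟩
  have hdvdiff : ∀ t : ℕ, (π ^ t) d₀ = d₀ ↔ ℓ ∣ t := by
    intro t
    rw [← Function.isPeriodicPt_iff_minimalPeriod_dvd]
    constructor
    · intro h
      show (⇑π)^[t] d₀ = d₀
      rw [Equiv.Perm.iterate_eq_pow]
      exact h
    · intro h
      have h' : (⇑π)^[t] d₀ = d₀ := h
      rwa [Equiv.Perm.iterate_eq_pow] at h'
  have hwelldef : ∀ a b : ℕ, (π ^ a) d₀ = (π ^ b) d₀ →
      ((a : ZMod ℓ) = (b : ZMod ℓ)) := by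
    have key : ∀ a b : ℕ, a ≤ b → (π ^ a) d₀ = (π ^ b) d₀ →
        ((a : ZMod ℓ) = (b : ZMod ℓ)) := by
      intro a b hab h
      have h1 : (π ^ (b - a)) d₀ = d₀ := by
        apply (π ^ a).injective
        rw [← Equiv.Perm.mul_apply, ← pow_add]
        have : a + (b - a) = b := by omega
        rw [this, ← h]
      have h2 : ℓ ∣ b - a := (hdvdiff _).1 h1
      exact (ZMod.natCast_eq_natCast_iff a b ℓ).2 ((Nat.modEq_iff_dvd' hab).2 h2)
    intro a b h
    rcases le_total a b with hab | hab
    · exact key a b hab h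
    · exact (key b a hab h.symm).symm
  -- the embedding into ZMod ℓ
  let Φf : Γ → Multiplicative (ZMod ℓ) := fun γ =>
    Multiplicative.ofAdd ((Classical.choose (hγO γ) : ℕ) : ZMod ℓ)
  have hΦspec : ∀ γ : Γ, (π ^ (Classical.choose (hγO γ))) d₀ = gact γ d₀ :=
    fun γ => Classical.choose_spec (hγO γ)
  let Φ : Γ →* Multiplicative (ZMod ℓ) :=
    { toFun := Φf
      map_one' := by
        have h1 := (hΦspec 1).trans (hgact_one d₀)
        have h2 : (π ^ (Classical.choose (hγO 1))) d₀ = (π ^ 0) d₀ := by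
          rw [pow_zero]; exact h1
        have := hwelldef _ 0 h2
        show Multiplicative.ofAdd _ = 1
        rw [this, Nat.cast_zero]
        exact ofAdd_zero
      map_mul' := by
        intro γ₁ γ₂
        have h1 := hΦspec (γ₁ * γ₂)
        have h2 := hΦspec γ₁
        have h3 := hΦspec γ₂
        have h4 : gact (γ₁ * γ₂) d₀ =
            (π ^ (Classical.choose (hγO γ₂) + Classical.choose (hγO γ₁))) d₀ := by
          calc gact (γ₁ * γ₂) d₀ = gact γ₁ (gact γ₂ d₀) := hgact_mul γ₁ γ₂ d₀
            _ = gact γ₁ ((π ^ (Classical.choose (hγO γ₂))) d₀) :=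
                congrArg (gact γ₁) h3.symm
            _ = (π ^ (Classical.choose (hγO γ₂))) (gact γ₁ d₀) := hgπpow γ₁ _ _
            _ = (π ^ (Classical.choose (hγO γ₂)))
                ((π ^ (Classical.choose (hγO γ₁))) d₀) := congrArg _ h2.symm
            _ = (π ^ (Classical.choose (hγO γ₂) + Classical.choose (hγO γ₁))) d₀ := by
                rw [← Equiv.Perm.mul_apply, ← pow_add]
        have h5 := hwelldef _ _ (h1.trans h4)
        show Multiplicative.ofAdd _ = Multiplicative.ofAdd _ * Multiplicative.ofAdd _
        rw [← ofAdd_add, h5]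
        refine congrArg Multiplicative.ofAdd ?_
        push_cast
        ring }
  have hΦinj : Function.Injective Φ := by
    rw [injective_iff_map_eq_one]
    intro γ hγ
    have h1 : ((Classical.choose (hγO γ) : ℕ) : ZMod ℓ) = 0 := by
      have : Multiplicative.toAdd (Φ γ) = 0 := by rw [hγ]; rfl
      exact this
    have h2 : ℓ ∣ Classical.choose (hγO γ) :=
      (ZMod.natCast_eq_zero_iff _ ℓ).1 h1
    have h3 : (π ^ (Classical.choose (hγO γ))) d₀ = d₀ := (hdvdiff _).2 h2
    have h4 : gact γ d₀ = d₀ := by rw [← hΦspec γ, h3]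
    exact hgfree γ d₀ h4
  have hcyc : IsCyclic Γ := by
    haveI : IsCyclic (Multiplicative (ZMod ℓ)) := inferInstance
    let eqv := MonoidHom.ofInjective hΦinj
    exact isCyclic_of_surjective eqv.symm eqv.symm.surjective
  refine ⟨hcyc, ?_⟩
  -- counting the vertices of the cycle
  set VC := {x : G.V // ∃ e ∈ C, x ∈ G.ends e} with hVC
  set sV : Setoid VC := (A.vSetoid ⊤).comap (Subtype.val : VC → G.V) with hsV
  have hfib : ∀ q : Quotient sV, Nat.card {a : VC // Quotient.mk sV a = q} = Nat.card Γ := by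
    intro q
    set b := q.out with hb
    have hmk : Quotient.mk sV b = q := q.out_eq
    have hmem : ∀ γ : Γ, ∃ e ∈ C, A.actV γ b.1 ∈ G.ends e := by
      intro γ
      obtain ⟨e, heC, hx⟩ := b.2
      refine ⟨A.actE γ e, hinv γ e heC, ?_⟩
      rw [A.ends_map]
      exact Sym2.mem_map.2 ⟨b.1, hx, rfl⟩
    let m : Γ → {a : VC // Quotient.mk sV a = q} := fun γ =>
      ⟨⟨A.actV γ b.1, hmem γ⟩, by
        rw [← hmk]
        refine Quotient.sound ?_
        exact ⟨γ⁻¹, Subgroup.mem_top _, by rw [map_inv, Equiv.Perm.inv_def, Equiv.symm_apply_apply]⟩⟩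
    have hbij : Function.Bijective m := by
      constructor
      · intro γ₁ γ₂ h
        have h1 : A.actV γ₁ b.1 = A.actV γ₂ b.1 :=
          congrArg (fun z => (Subtype.val (Subtype.val z))) h
        have h2 : A.actV (γ₂⁻¹ * γ₁) b.1 = b.1 := by
          rw [map_mul, Equiv.Perm.mul_apply, h1, map_inv, Equiv.Perm.inv_def, Equiv.symm_apply_apply]
        have := hfree _ _ h2
        rwa [inv_mul_eq_one, eq_comm] at this
      · rintro ⟨⟨a, ha⟩, hq⟩
        have : sV.r ⟨a, ha⟩ b := Quotient.exact (hq.trans hmk.symm)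
        obtain ⟨δ, -, hδ⟩ := this
        refine ⟨δ⁻¹, ?_⟩
        apply Subtype.ext
        apply Subtype.ext
        show A.actV δ⁻¹ b.1 = a
        have hδ' : A.actV δ a = b.1 := hδ
        rw [← hδ', map_inv, Equiv.Perm.inv_def, Equiv.symm_apply_apply]
    exact (Nat.card_eq_of_bijective m hbij).symm
  have hcount : Fintype.card VC = Fintype.card (Quotient sV) * Nat.card Γ := by
    rw [card_eq_sum_fibers sV, Finset.sum_congr rfl fun q _ => hfib q,
      Finset.sum_const, Finset.card_univ, smul_eq_mul]
  have hNatVC : Nat.card VC = Fintype.card VC := Nat.card_eq_fintype_card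
  have hdvd : Nat.card Γ ∣ Nat.card VC := by
    rw [hNatVC, hcount]
    exact dvd_mul_left _ _
  refine ⟨hdvd, ?_⟩
  -- strictness
  have hy₀ : Sym2.Mem.other hx₀ ∈ G.ends e₀ := Sym2.other_mem hx₀
  have hx₀VC : (⟨x₀, e₀, he₀, hx₀⟩ : VC) = ⟨x₀, e₀, he₀, hx₀⟩ := rfl
  have hVCpos : 0 < Fintype.card VC := by
    rw [Fintype.card_pos_iff]
    exact ⟨⟨x₀, e₀, he₀, hx₀⟩⟩
  have hqne : Fintype.card (Quotient sV) ≠ 1 := by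
    intro h1
    haveI : Subsingleton (Quotient sV) := Fintype.card_le_one_iff_subsingleton.1 (le_of_eq h1)
    have heqq : Quotient.mk sV ⟨x₀, e₀, he₀, hx₀⟩ =
        Quotient.mk sV ⟨Sym2.Mem.other hx₀, e₀, he₀, hy₀⟩ := Subsingleton.elim _ _
    have hrel := Quotient.exact heqq
    obtain ⟨δ, -, hδ⟩ := hrel
    exact hnv e₀ ⟨x₀, Sym2.Mem.other hx₀, (Sym2.other_spec hx₀).symm, δ,
      Subgroup.mem_top δ, hδ⟩
  have hΓpos : 0 < Nat.card Γ := Nat.card_pos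
  have hqpos : 0 < Fintype.card (Quotient sV) := by
    by_contra h
    have h0 : Fintype.card (Quotient sV) = 0 := by omega
    rw [hcount, h0, zero_mul] at hVCpos
    omega
  rw [hNatVC, hcount]
  have h2q : 2 ≤ Fintype.card (Quotient sV) := by omega
  nlinarith [hΓpos, h2q]

end GraphAction
/-- If `Γ` acts harmonically on a graph `G` of genus 1 and the quotient
`G/Γ` also has genus 1, then the quotient map is unramified (`R = 0`), `Γ` is cyclic and
acts by rotations of the unique cycle of `G` (it preserves the cycle and acts freely on
its vertices), and `|Γ|` is a strict divisor of the number of vertices of the cycle. -/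
theorem genus_one_quotient_genus_one {Γ : Type} [Group Γ] {G : Multigraph}
    (A : GraphAction Γ G) (hA : A.ActsHarmonically)
    (hg : G.genus = 1) (hq : A.quotGenus ⊤ = 1) :
    A.ram ⊤ = 0 ∧ IsCyclic Γ ∧
    ∀ C : Set G.E, G.IsCycleSet C →
      (∀ (γ : Γ) (e : G.E), e ∈ C → A.actE γ e ∈ C) ∧
      (∀ γ : Γ, γ ≠ 1 → ∀ x : G.V, (∃ e ∈ C, x ∈ G.ends e) → A.actV γ x ≠ x) ∧
      Nat.card Γ ∣ Nat.card {x : G.V // ∃ e ∈ C, x ∈ G.ends e} ∧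
      Nat.card Γ < Nat.card {x : G.V // ∃ e ∈ C, x ∈ G.ends e} := by
  classical
  have hgcard : Fintype.card G.E = Fintype.card G.V := by
    have h := hg
    rw [Multigraph.genus] at h
    omega
  have hqcard : Nat.card (A.quotE ⊤) = Nat.card (A.quotV ⊤) := by
    have h := hq
    rw [GraphAction.quotGenus] at h
    omega
  obtain ⟨hnv, hfree⟩ := A.no_vertical_and_free hA hgcard hqcard
  refine ⟨A.ram_top_zero hnv hfree, ?_, ?_⟩
  · obtain ⟨C₀, hC₀⟩ := G.exists_cycleSet hgcard
    exact (A.cycle_master hnv hfree (le_of_eq hgcard) C₀ hC₀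
      (fun γ e he => A.cycle_invariant (le_of_eq hgcard) C₀ hC₀ γ e he)).1
  · intro C hC
    have hinvC : ∀ (γ : Γ) (e : G.E), e ∈ C → A.actE γ e ∈ C :=
      fun γ e he => A.cycle_invariant (le_of_eq hgcard) C hC γ e he
    obtain ⟨-, hdvd, hlt⟩ := A.cycle_master hnv hfree (le_of_eq hgcard) C hC hinvC
    exact ⟨hinvC, fun γ hγ x _ hfix => hγ (hfree γ x hfix), hdvd, hlt⟩
end

section
/- (Hurwitz genus bound for graphs) If a group Γ acts harmonically on a graph G of genus g ≥ 2, then |Γ| ≤ 6(g − 1). -/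
open scoped Classical

theorem Equiv.Perm.inv_apply_self {α : Type*} (f : Equiv.Perm α) (x : α) : f⁻¹ (f x) = x :=
  Equiv.symm_apply_apply f x

section Dev
variable {Γ : Type} [Group Γ] {G : Multigraph}

lemma finite_gamma (A : GraphAction Γ G) : Finite Γ := by
  have hinj : Function.Injective (fun γ : Γ => (A.actV γ, A.actE γ)) := by
    intro a b h
    have h1 : A.actV a = A.actV b := congrArg Prod.fst h
    have h2 : A.actE a = A.actE b := congrArg Prod.snd h
    have : a⁻¹ * b = 1 := by
      apply A.faithful
      · intro x
        rw [map_mul, map_inv, Equiv.Perm.mul_apply, ← h1, Equiv.Perm.inv_apply_self]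
      · intro e
        rw [map_mul, map_inv, Equiv.Perm.mul_apply, ← h2, Equiv.Perm.inv_apply_self]
    exact inv_mul_eq_one.mp this
  exact Finite.of_injective _ hinj

-- test MulAction setup
example (A : GraphAction Γ G) (x : G.V) : Nat.card {y // A.vrel ⊤ x y} * A.stabOrder ⊤ x = Nat.card Γ := by
  letI : MulAction Γ G.V := MulAction.compHom _ A.actV
  have hsmul : ∀ (γ : Γ) (v : G.V), γ • v = A.actV γ v := fun _ _ => rfl
  have e1 : {y // A.vrel ⊤ x y} ≃ MulAction.orbit Γ x := by
    apply Equiv.subtypeEquivRight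
    intro y
    simp only [GraphAction.vrel, Subgroup.mem_top, true_and, MulAction.mem_orbit_iff]
    rfl
  have e2 : {γ : Γ // γ ∈ (⊤ : Subgroup Γ) ∧ A.actV γ x = x} ≃ MulAction.stabilizer Γ x := by
    apply Equiv.subtypeEquivRight
    intro γ
    simp only [Subgroup.mem_top, true_and, MulAction.mem_stabilizer_iff]
    rfl
  rw [GraphAction.stabOrder, Nat.card_congr e1, Nat.card_congr e2,
    Nat.card_congr (MulAction.orbitEquivQuotientStabilizer Γ x)]
  exact Subgroup.index_mul_card _

end Dev

section Dev2
variable {Γ : Type} [Group Γ] {G : Multigraph}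

lemma star_fixed (A : GraphAction Γ G) (hA : A.ActsHarmonically) (γ : Γ) (x : G.V)
    (hx : A.actV γ x = x) (e : G.E) (he : x ∈ G.ends e) (hee : A.actE γ e = e) :
    ∀ f, x ∈ G.ends f → A.actE γ f = f := by
  letI : MulAction Γ G.V := MulAction.compHom _ A.actV
  letI : MulAction Γ G.E := MulAction.compHom _ A.actE
  set Δ := Subgroup.zpowers γ with hΔ
  have hfixV : ∀ δ ∈ Δ, A.actV δ x = x := by
    intro δ hδ
    have : Δ ≤ MulAction.stabilizer Γ x := Subgroup.zpowers_le.mpr hx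
    exact this hδ
  have hfixE : ∀ δ ∈ Δ, A.actE δ e = e := by
    intro δ hδ
    have : Δ ≤ MulAction.stabilizer Γ e := Subgroup.zpowers_le.mpr hee
    exact this hδ
  have hnv : ∀ f, x ∈ G.ends f → ¬ A.Vertical Δ f := by
    rintro f hf ⟨a, b, hab, δ, hδ, hab2⟩
    rw [hab, Sym2.mem_iff] at hf
    have hd : a = b := by
      rcases hf with rfl | rfl
      · rw [hfixV δ hδ] at hab2; exact hab2
      · have h2 : a = A.actV δ⁻¹ x := by
          rw [← hab2, map_inv, Equiv.Perm.inv_apply_self]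
        rw [hfixV δ⁻¹ (inv_mem hδ)] at h2; exact h2
    exact G.loopless f (hab ▸ Sym2.mk_isDiag_iff.mpr hd)
  intro f hf
  have hxx : A.vrel Δ x x := ⟨1, Δ.one_mem, by simp⟩
  have h1 := (hA Δ).1 x f e (hnv f hf) (hnv e he) ⟨x, hf, hxx⟩ ⟨x, he, hxx⟩
  have hre : Nat.card {e'' // x ∈ G.ends e'' ∧ A.erel Δ e'' e} = 1 := by
    rw [Nat.card_eq_one_iff_unique]
    refine ⟨⟨?_⟩, ⟨⟨e, he, 1, Δ.one_mem, by simp⟩⟩⟩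
    rintro ⟨a, ha1, δ, hδ, ha2⟩ ⟨b, hb1, δ', hδ', hb2⟩
    have hae : ∀ (c : G.E) (ε : Γ), ε ∈ Δ → A.actE ε c = e → c = e := by
      intro c ε hε hc
      have : A.actE ε⁻¹ e = c := by rw [← hc, map_inv, Equiv.Perm.inv_apply_self]
      rw [hfixE ε⁻¹ (inv_mem hε)] at this; exact this.symm
    exact Subtype.ext ((hae a δ hδ ha2).trans (hae b δ' hδ' hb2).symm)
  rw [hre] at h1
  have hss := (Nat.card_eq_one_iff_unique.mp h1).1
  have m1 : x ∈ G.ends (A.actE γ f) ∧ A.erel Δ (A.actE γ f) f := by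
    constructor
    · rw [A.ends_map, Sym2.mem_map]; exact ⟨x, hf, hx⟩
    · exact ⟨γ⁻¹, inv_mem (Subgroup.mem_zpowers γ), by
        rw [map_inv, Equiv.Perm.inv_apply_self]⟩
  have m2 : x ∈ G.ends f ∧ A.erel Δ f f := ⟨hf, 1, Δ.one_mem, by simp⟩
  exact congrArg Subtype.val (hss.allEq ⟨_, m1⟩ ⟨_, m2⟩)

lemma eq_one_of_fix_edge (A : GraphAction Γ G) (hA : A.ActsHarmonically) (γ : Γ) (x : G.V)
    (hx : A.actV γ x = x) (e : G.E) (he : x ∈ G.ends e) (hee : A.actE γ e = e) :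
    γ = 1 := by
  set P : G.V → Prop := fun v => A.actV γ v = v ∧ ∃ f, v ∈ G.ends f ∧ A.actE γ f = f
    with hP
  have hstep : ∀ v, P v → ∀ f, v ∈ G.ends f → A.actE γ f = f := by
    rintro v ⟨hv, f0, hf0, hf0'⟩
    exact star_fixed A hA γ v hv f0 hf0 hf0'
  have hadj : ∀ v u, P v →
      (SimpleGraph.fromRel fun a b : G.V => ∃ e : G.E, G.ends e = s(a, b)).Adj v u → P u := by
    rintro v u hv ⟨hne, hor⟩
    obtain ⟨f, hf⟩ : ∃ f, G.ends f = s(v, u) := by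
      rcases hor with ⟨f, hf⟩ | ⟨f, hf⟩
      · exact ⟨f, hf⟩
      · exact ⟨f, by rw [hf, Sym2.eq_swap]⟩
    have hvf : v ∈ G.ends f := by rw [hf]; exact Sym2.mem_mk_left v u
    have hff := hstep v hv f hvf
    have hmap : s(A.actV γ v, A.actV γ u) = s(v, u) := by
      rw [← Sym2.map_pair_eq, ← hf, ← A.ends_map, hff, hf]
    rw [hv.1] at hmap
    have hu : A.actV γ u = u := by
      rcases Sym2.eq_iff.mp hmap with ⟨-, h⟩ | ⟨h1, -⟩
      · exact h
      · exact absurd h1 hne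
    exact ⟨hu, f, by rw [hf]; exact Sym2.mem_mk_right v u, hff⟩
  have hwalk : ∀ (a b : G.V), P a →
      (SimpleGraph.fromRel fun a b : G.V => ∃ e : G.E, G.ends e = s(a, b)).Walk a b → P b := by
    intro a b ha w
    induction w with
    | nil => exact ha
    | cons h p ih => exact ih (hadj _ _ ha h)
  have hall : ∀ v, P v := by
    intro v
    obtain ⟨w⟩ := G.connected.preconnected x v
    exact hwalk x v ⟨hx, e, he, hee⟩ w
  apply A.faithful
  · exact fun v => (hall v).1
  · intro f
    exact hstep _ (hall ((G.ends f).out.1)) f (Sym2.out_fst_mem _)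
end Dev2

section Dev3

lemma card_eq_sum_fibers_s10 {X Y : Type} [Fintype X] [Fintype Y] (f : X → Y) :
    Nat.card X = ∑ y : Y, Nat.card {x // f x = y} := by
  calc Nat.card X = Nat.card ((y : Y) × {x // f x = y}) :=
        Nat.card_congr (Equiv.sigmaFiberEquiv f).symm
    _ = ∑ y : Y, Nat.card {x // f x = y} := by
        rw [Nat.card_eq_fintype_card, Fintype.card_sigma]
        simp only [Fintype.card_eq_nat_card]

lemma card_pairs {X Y : Type} [Fintype X] [Fintype Y] (R : X → Y → Prop) :
    ∑ x : X, Nat.card {y // R x y} = ∑ y : Y, Nat.card {x // R x y} := by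
  have e : ((x : X) × {y // R x y}) ≃ ((y : Y) × {x // R x y}) :=
    ⟨fun s => ⟨s.2.1, s.1, s.2.2⟩, fun s => ⟨s.2.1, s.1, s.2.2⟩, fun _ => rfl, fun _ => rfl⟩
  have h1 : Nat.card ((x : X) × {y // R x y}) = ∑ x : X, Nat.card {y // R x y} := by
    rw [Nat.card_eq_fintype_card, Fintype.card_sigma]
    simp only [Fintype.card_eq_nat_card]
  have h2 : Nat.card ((y : Y) × {x // R x y}) = ∑ y : Y, Nat.card {x // R x y} := by
    rw [Nat.card_eq_fintype_card, Fintype.card_sigma]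
    simp only [Fintype.card_eq_nat_card]
  rw [← h1, ← h2, Nat.card_congr e]

lemma sum_comp_const {X Y : Type} [Fintype X] [Fintype Y] (f : X → Y) (c : Y → ℕ) :
    ∑ x : X, c (f x) = ∑ y : Y, Nat.card {x // f x = y} * c y := by
  rw [← Fintype.sum_fiberwise f (fun x => c (f x))]
  refine Finset.sum_congr rfl fun y _ => ?_
  have : ∀ i : {i // f i = y}, c (f i.val) = c y := fun i => by rw [i.prop]
  rw [Finset.sum_congr rfl fun i _ => this i, Finset.sum_const, Finset.card_univ, smul_eq_mul,
    Fintype.card_eq_nat_card]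

/-- If a finite group acts freely on a finite type, its order divides the cardinality. -/
lemma card_dvd_of_free {H X : Type} [Group H] [Finite H] [Fintype X]
    [MulAction H X] (hfree : ∀ (h : H) (x : X), h • x = x → h = 1) :
    Nat.card H ∣ Nat.card X := by
  haveI : Fintype (Quotient (MulAction.orbitRel H X)) := Fintype.ofFinite _
  rw [card_eq_sum_fibers_s10 (Quotient.mk (MulAction.orbitRel H X))]
  apply Finset.dvd_sum
  intro ω _
  have hfib : {x // Quotient.mk (MulAction.orbitRel H X) x = ω} ≃ H := by
    refine (Equiv.subtypeEquivRight (q := fun x => x ∈ MulAction.orbit H (Quotient.out ω))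
      fun x => ?_).trans (Equiv.ofBijective (fun h : H => ⟨h • (Quotient.out ω), h, rfl⟩)
        ?_).symm
    · constructor
      · intro h
        rw [← Quotient.out_eq ω] at h
        exact MulAction.orbitRel_apply.mp (Quotient.exact h)
      · intro h
        rw [← Quotient.out_eq ω]
        exact Quotient.sound (MulAction.orbitRel_apply.mpr h)
    · constructor
      · intro a b hab
        have h2 : (b⁻¹ * a) • (Quotient.out ω) = Quotient.out ω := by
          have := congrArg Subtype.val hab
          simp only at this
          rw [mul_smul, this, inv_smul_smul]
        have := hfree _ _ h2
        rwa [inv_mul_eq_one, eq_comm] at this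
      · rintro ⟨y, h, rfl⟩
        exact ⟨h, rfl⟩
  rw [Nat.card_congr hfib]

end Dev3

section Dev4
variable {Γ : Type} [Group Γ] {G : Multigraph}

noncomputable instance {A : GraphAction Γ G} {Δ : Subgroup Γ} : Fintype (A.quotV Δ) :=
  Fintype.ofFinite _

noncomputable instance {A : GraphAction Γ G} {Δ : Subgroup Γ} : Fintype (A.quotE Δ) :=
  Fintype.ofFinite _

lemma act_mem_ends (A : GraphAction Γ G) (γ : Γ) {x : G.V} {e : G.E} :
    x ∈ G.ends e ↔ A.actV γ x ∈ G.ends (A.actE γ e) := by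
  constructor
  · intro h
    rw [A.ends_map, Sym2.mem_map]
    exact ⟨x, h, rfl⟩
  · intro h
    rw [A.ends_map, Sym2.mem_map] at h
    obtain ⟨a, ha, ha2⟩ := h
    rwa [(A.actV γ).injective ha2] at ha

lemma vertical_act (A : GraphAction Γ G) (γ : Γ) (e : G.E) :
    A.Vertical ⊤ (A.actE γ e) ↔ A.Vertical ⊤ e := by
  have key : ∀ (γ : Γ) (e : G.E), A.Vertical ⊤ e → A.Vertical ⊤ (A.actE γ e) := by
    rintro γ e ⟨a, b, hab, δ, -, hδ2⟩
    refine ⟨A.actV γ a, A.actV γ b, by rw [A.ends_map, hab, Sym2.map_pair_eq],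
      γ * δ * γ⁻¹, Subgroup.mem_top _, ?_⟩
    rw [map_mul, map_mul, map_inv, Equiv.Perm.mul_apply, Equiv.Perm.mul_apply,
      Equiv.Perm.inv_apply_self, hδ2]
  constructor
  · intro h
    have := key γ⁻¹ _ h
    rwa [map_inv, Equiv.Perm.inv_apply_self] at this
  · exact key γ e

lemma nonvert_stab_trivial (A : GraphAction Γ G) (hA : A.ActsHarmonically) (e : G.E)
    (hne : ¬ A.Vertical ⊤ e) (γ : Γ) (h : A.actE γ e = e) : γ = 1 := by
  obtain ⟨b, hab⟩ : ∃ b, G.ends e = s((G.ends e).out.1, b) :=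
    Sym2.mem_iff_exists.mp (Sym2.out_fst_mem _)
  set a := (G.ends e).out.1
  have hmap : s(A.actV γ a, A.actV γ b) = s(a, b) := by
    rw [← Sym2.map_pair_eq, ← hab, ← A.ends_map, h, hab]
  rcases Sym2.eq_iff.mp hmap with ⟨h1, -⟩ | ⟨h1, h2⟩
  · exact eq_one_of_fix_edge A hA γ a h1 e (hab ▸ Sym2.mem_mk_left a b) h
  · exact absurd ⟨a, b, hab, γ, Subgroup.mem_top _, h1⟩ hne

lemma orbit_stab (A : GraphAction Γ G) (x : G.V) :
    Nat.card {y // A.vrel ⊤ x y} * A.stabOrder ⊤ x = Nat.card Γ := by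
  letI : MulAction Γ G.V := MulAction.compHom _ A.actV
  have e1 : {y // A.vrel ⊤ x y} ≃ MulAction.orbit Γ x := by
    apply Equiv.subtypeEquivRight
    intro y
    simp only [GraphAction.vrel, Subgroup.mem_top, true_and, MulAction.mem_orbit_iff]
    rfl
  have e2 : {γ : Γ // γ ∈ (⊤ : Subgroup Γ) ∧ A.actV γ x = x} ≃ MulAction.stabilizer Γ x := by
    apply Equiv.subtypeEquivRight
    intro γ
    simp only [Subgroup.mem_top, true_and, MulAction.mem_stabilizer_iff]
    rfl
  rw [GraphAction.stabOrder, Nat.card_congr e1, Nat.card_congr e2,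
    Nat.card_congr (MulAction.orbitEquivQuotientStabilizer Γ x)]
  exact Subgroup.index_mul_card _

lemma fiber_card_V (A : GraphAction Γ G) (ω : A.quotV ⊤) :
    Nat.card {x : G.V // Quotient.mk (A.vSetoid ⊤) x = ω} * A.r ⊤ ω = Nat.card Γ := by
  have e1 : {x : G.V // Quotient.mk (A.vSetoid ⊤) x = ω} ≃
      {y // A.vrel ⊤ (Quotient.out ω) y} := by
    apply Equiv.subtypeEquivRight
    intro x
    constructor
    · intro h
      rw [← Quotient.out_eq ω] at h
      exact (A.vSetoid ⊤).iseqv.symm (Quotient.exact h)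
    · intro h
      rw [← Quotient.out_eq ω]
      exact Quotient.sound ((A.vSetoid ⊤).iseqv.symm h)
  rw [Nat.card_congr e1]
  exact orbit_stab A (Quotient.out ω)

lemma r_pos (A : GraphAction Γ G) (ω : A.quotV ⊤) : 0 < A.r ⊤ ω := by
  haveI := finite_gamma A
  haveI : Finite {γ : Γ // γ ∈ (⊤ : Subgroup Γ) ∧ A.actV γ (Quotient.out ω) = Quotient.out ω} :=
    Subtype.finite
  haveI : Nonempty {γ : Γ // γ ∈ (⊤ : Subgroup Γ) ∧ A.actV γ (Quotient.out ω) = Quotient.out ω} :=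
    ⟨⟨1, Subgroup.mem_top _, by simp⟩⟩
  exact Nat.card_pos

lemma cardV (A : GraphAction Γ G) :
    (Fintype.card G.V : ℚ) = ∑ ω : A.quotV ⊤, (Nat.card Γ : ℚ) / (A.r ⊤ ω : ℚ) := by
  rw [Fintype.card_eq_nat_card, card_eq_sum_fibers_s10 (Quotient.mk (A.vSetoid ⊤))]
  push_cast
  refine Finset.sum_congr rfl fun ω _ => ?_
  have h1 := fiber_card_V A ω
  have h2 : (0 : ℚ) < (A.r ⊤ ω : ℚ) := by exact_mod_cast r_pos A ω
  rw [eq_div_iff (ne_of_gt h2)]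
  exact_mod_cast h1

end Dev4

section Dev5
variable {Γ : Type} [Group Γ] {G : Multigraph}

lemma cardE_nonvert (A : GraphAction Γ G) (hA : A.ActsHarmonically) :
    Nat.card {e : G.E // ¬ A.Vertical ⊤ e} =
      Fintype.card (A.quotE ⊤) * Nat.card Γ := by
  haveI := finite_gamma A
  rw [card_eq_sum_fibers_s10 (Quotient.mk ((A.eSetoid ⊤).comap
    (Subtype.val : {e : G.E // ¬ A.Vertical ⊤ e} → G.E)))]
  rw [Finset.sum_congr rfl (fun ω _ => ?_), Finset.sum_const, Finset.card_univ, smul_eq_mul]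
  set a : G.E := (Quotient.out ω).val with ha
  have hna : ¬ A.Vertical ⊤ a := (Quotient.out ω).prop
  have e1 : {s : {e : G.E // ¬ A.Vertical ⊤ e} //
      Quotient.mk ((A.eSetoid ⊤).comap Subtype.val) s = ω} ≃
      {s : {e : G.E // ¬ A.Vertical ⊤ e} // A.erel ⊤ a s.val} := by
    apply Equiv.subtypeEquivRight
    intro s
    constructor
    · intro h
      rw [← Quotient.out_eq ω] at h
      exact ((A.eSetoid ⊤).comap Subtype.val).iseqv.symm (Quotient.exact h)
    · intro h
      rw [← Quotient.out_eq ω]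
      exact Quotient.sound (((A.eSetoid ⊤).comap Subtype.val).iseqv.symm h)
  have e2 : {s : {e : G.E // ¬ A.Vertical ⊤ e} // A.erel ⊤ a s.val} ≃
      {e : G.E // A.erel ⊤ a e} :=
    { toFun := fun s => ⟨s.val.val, s.prop⟩
      invFun := fun e => ⟨⟨e.val, by
        obtain ⟨δ, -, hδ⟩ := e.prop
        rw [← hδ]
        exact fun h => hna ((vertical_act A δ a).mp h)⟩, e.prop⟩
      left_inv := fun s => rfl
      right_inv := fun e => rfl }
  have e3 : Γ ≃ {e : G.E // A.erel ⊤ a e} := by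
    refine Equiv.ofBijective (fun γ => ⟨A.actE γ a, γ, Subgroup.mem_top _, rfl⟩) ⟨?_, ?_⟩
    · intro γ γ' h
      have h2 : A.actE (γ'⁻¹ * γ) a = a := by
        have := congrArg Subtype.val h
        simp only at this
        rw [map_mul, map_inv, Equiv.Perm.mul_apply, this, Equiv.Perm.inv_apply_self]
      have := nonvert_stab_trivial A hA a hna _ h2
      rwa [inv_mul_eq_one, eq_comm] at this
    · rintro ⟨e, δ, -, rfl⟩
      exact ⟨δ, rfl⟩
  rw [Nat.card_congr (e1.trans e2), Nat.card_congr e3.symm]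

lemma card_ends (e : G.E) : Nat.card {x : G.V // x ∈ G.ends e} = 2 := by
  obtain ⟨b, hab⟩ : ∃ b, G.ends e = s((G.ends e).out.1, b) :=
    Sym2.mem_iff_exists.mp (Sym2.out_fst_mem _)
  set a := (G.ends e).out.1
  have hne : a ≠ b := fun h => G.loopless e (hab ▸ Sym2.mk_isDiag_iff.mpr h)
  have e1 : {x : G.V // x ∈ G.ends e} ≃ ({a, b} : Set G.V) := by
    apply Equiv.subtypeEquivRight
    intro x
    rw [hab, Sym2.mem_iff, Set.mem_insert_iff, Set.mem_singleton_iff]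
  rw [Nat.card_congr e1, Nat.card_coe_set_eq, Set.ncard_pair hne]

lemma two_mul_vert (A : GraphAction Γ G) :
    ∑ x : G.V, A.vertMult ⊤ x = 2 * Nat.card {e : G.E // A.Vertical ⊤ e} := by
  have h := card_pairs (fun (x : G.V) (t : {e : G.E // A.Vertical ⊤ e}) => x ∈ G.ends t.val)
  have hL : ∀ x : G.V,
      Nat.card {t : {e : G.E // A.Vertical ⊤ e} // x ∈ G.ends t.val} = A.vertMult ⊤ x := by
    intro x
    apply Nat.card_congr
    exact (Equiv.subtypeSubtypeEquivSubtypeInter (fun e => A.Vertical ⊤ e)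
      (fun e => x ∈ G.ends e)).trans (Equiv.subtypeEquivRight fun e => and_comm)
  have hR : ∀ t : {e : G.E // A.Vertical ⊤ e},
      Nat.card {x : G.V // x ∈ G.ends t.val} = 2 := fun t => card_ends t.val
  calc ∑ x : G.V, A.vertMult ⊤ x
      = ∑ x : G.V, Nat.card {t : {e : G.E // A.Vertical ⊤ e} // x ∈ G.ends t.val} := by
        exact (Finset.sum_congr rfl fun x _ => (hL x)).symm
    _ = ∑ t : {e : G.E // A.Vertical ⊤ e}, Nat.card {x : G.V // x ∈ G.ends t.val} := h
    _ = ∑ _t : {e : G.E // A.Vertical ⊤ e}, 2 := Finset.sum_congr rfl fun t _ => hR t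
    _ = 2 * Nat.card {e : G.E // A.Vertical ⊤ e} := by
        rw [Finset.sum_const, Finset.card_univ, smul_eq_mul, mul_comm, Fintype.card_eq_nat_card]

lemma vertMult_eq (A : GraphAction Γ G) {x y : G.V} (h : A.vrel ⊤ x y) :
    A.vertMult ⊤ x = A.vertMult ⊤ y := by
  obtain ⟨γ, -, hγ⟩ := h
  apply Nat.card_congr
  refine Equiv.subtypeEquiv (A.actE γ : Equiv.Perm G.E) fun e => ?_
  rw [← hγ]
  exact and_congr (act_mem_ends A γ) (vertical_act A γ e).symm

lemma stab_dvd_vertMult (A : GraphAction Γ G) (hA : A.ActsHarmonically) (x : G.V) :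
    A.stabOrder ⊤ x ∣ A.vertMult ⊤ x := by
  haveI := finite_gamma A
  letI : MulAction Γ G.V := MulAction.compHom _ A.actV
  set H := MulAction.stabilizer Γ x with hH
  have hstab : ∀ h : H, A.actV h.val x = x := fun h => h.prop
  letI : MulAction H {e : G.E // x ∈ G.ends e ∧ A.Vertical ⊤ e} :=
    { smul := fun h t => ⟨A.actE h.val t.val, by
        have hm := (act_mem_ends A h.val).mp t.prop.1
        rwa [hstab h] at hm,
        (vertical_act A h.val t.val).mpr t.prop.2⟩
      one_smul := fun t => Subtype.ext (by
        show A.actE ((1 : H) : Γ) t.val = t.val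
        rw [OneMemClass.coe_one, map_one, Equiv.Perm.one_apply])
      mul_smul := fun h h' t => Subtype.ext (by
        show A.actE ((h * h' : H) : Γ) t.val = A.actE h.val (A.actE h'.val t.val)
        rw [Subgroup.coe_mul, map_mul, Equiv.Perm.mul_apply]) }
  have hfree : ∀ (h : H) (t : {e : G.E // x ∈ G.ends e ∧ A.Vertical ⊤ e}),
      h • t = t → h = 1 := by
    intro h t ht
    have h1 : A.actE h.val t.val = t.val := congrArg Subtype.val ht
    exact Subtype.ext (eq_one_of_fix_edge A hA h.val x (hstab h) t.val t.prop.1 h1)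
  have hdvd := card_dvd_of_free hfree
  have hcards : A.stabOrder ⊤ x = Nat.card H := by
    apply Nat.card_congr
    apply Equiv.subtypeEquivRight
    intro γ
    simp only [Subgroup.mem_top, true_and]
    rfl
  rw [GraphAction.vertMult, hcards]
  exact hdvd

end Dev5

section Dev6
variable {Γ : Type} [Group Γ] {G : Multigraph}

lemma r_mul_w (A : GraphAction Γ G) (hA : A.ActsHarmonically) (ω : A.quotV ⊤) :
    A.r ⊤ ω * A.w ⊤ ω = A.vertMult ⊤ (Quotient.out ω) :=
  Nat.mul_div_cancel' (stab_dvd_vertMult A hA (Quotient.out ω))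

lemma sum_vert_grouped (A : GraphAction Γ G) (hA : A.ActsHarmonically) :
    ((∑ x : G.V, A.vertMult ⊤ x : ℕ) : ℚ) =
      ∑ ω : A.quotV ⊤, (Nat.card Γ : ℚ) * (A.w ⊤ ω : ℚ) := by
  have hconst : ∀ x : G.V,
      A.vertMult ⊤ x = A.vertMult ⊤ (Quotient.out (Quotient.mk (A.vSetoid ⊤) x)) :=
    fun x => vertMult_eq A ((A.vSetoid ⊤).iseqv.symm (Quotient.mk_out x))
  rw [Finset.sum_congr rfl fun x _ => hconst x,
    sum_comp_const (Quotient.mk (A.vSetoid ⊤)) (fun ω => A.vertMult ⊤ (Quotient.out ω))]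
  push_cast
  refine Finset.sum_congr rfl fun ω _ => ?_
  have h1 := fiber_card_V A ω
  have h2 := r_mul_w A hA ω
  have hrpos : (0 : ℚ) < (A.r ⊤ ω : ℚ) := by exact_mod_cast r_pos A ω
  have h1q : (Nat.card {x : G.V // Quotient.mk (A.vSetoid ⊤) x = ω} : ℚ) * (A.r ⊤ ω : ℚ)
      = (Nat.card Γ : ℚ) := by exact_mod_cast h1
  have h2q : (A.r ⊤ ω : ℚ) * (A.w ⊤ ω : ℚ) = (A.vertMult ⊤ (Quotient.out ω) : ℚ) := by
    exact_mod_cast h2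
  linear_combination (A.w ⊤ ω : ℚ) * h1q -
    (Nat.card {x : G.V // Quotient.mk (A.vSetoid ⊤) x = ω} : ℚ) * h2q

lemma cardE_split (A : GraphAction Γ G) :
    Nat.card {e : G.E // A.Vertical ⊤ e} + Nat.card {e : G.E // ¬ A.Vertical ⊤ e}
      = Fintype.card G.E := by
  rw [← Nat.card_sum, Fintype.card_eq_nat_card]
  exact Nat.card_congr (Equiv.sumCompl _)

end Dev6

section Dev7
variable {Γ : Type} [Group Γ] {G : Multigraph}

lemma conn_bound {W : Type} [Fintype W] (Q : SimpleGraph W) (hQ : Q.Connected) :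
    Fintype.card W ≤ Nat.card Q.edgeSet + 1 := by
  haveI : Nonempty W := hQ.nonempty
  obtain ⟨v0⟩ := hQ.nonempty
  have key : ∀ v : W, ∃ u : W, v ≠ v0 → Q.Adj v u ∧ Q.dist u v0 < Q.dist v v0 := by
    intro v
    by_cases hv : v = v0
    · exact ⟨v0, fun h => absurd hv h⟩
    · obtain ⟨p, hp⟩ := (hQ v v0).exists_walk_length_eq_dist
      cases p with
      | nil => exact absurd rfl hv
      | @cons _ u _ h q =>
        refine ⟨u, fun _ => ⟨h, ?_⟩⟩
        have h1 : Q.dist u v0 ≤ q.length := SimpleGraph.dist_le q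
        rw [SimpleGraph.Walk.length_cons] at hp
        omega
  choose u hu using key
  have hmem : ∀ v : {v : W // v ≠ v0}, s(v.val, u v.val) ∈ Q.edgeSet := fun v =>
    Q.mem_edgeSet.mpr (hu v.val v.prop).1
  have hinj : Function.Injective
      (fun v : {v : W // v ≠ v0} => (⟨s(v.val, u v.val), hmem v⟩ : Q.edgeSet)) := by
    intro v v' hvv'
    have h := congrArg Subtype.val hvv'
    simp only at h
    rcases Sym2.eq_iff.mp h with ⟨h1, -⟩ | ⟨h1, h2⟩
    · exact Subtype.ext h1
    · exfalso
      have d1 := (hu v.val v.prop).2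
      have d2 := (hu v'.val v'.prop).2
      rw [← h1, ← h2] at d2
      omega
  have hcard := Nat.card_le_card_of_injective _ hinj
  have hsplit : Nat.card {v : W // v = v0} + Nat.card {v : W // v ≠ v0} = Nat.card W := by
    rw [← Nat.card_sum]
    exact Nat.card_congr (Equiv.sumCompl _)
  have hone : Nat.card {v : W // v = v0} = 1 :=
    Nat.card_eq_one_iff_unique.mpr
      ⟨⟨fun a b => Subtype.ext (a.prop.trans b.prop.symm)⟩, ⟨⟨v0, rfl⟩⟩⟩
  have hbridge : Nat.card ↥Q.edgeSet = Nat.card {x : Sym2 W // x ∈ Q.edgeSet} := rfl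
  rw [Fintype.card_eq_nat_card]
  omega

end Dev7

section Dev7b
variable {Γ : Type} [Group Γ] {G : Multigraph}

lemma quot_bound (A : GraphAction Γ G) :
    Fintype.card (A.quotV ⊤) ≤ Fintype.card (A.quotE ⊤) + 1 := by
  set mkV := Quotient.mk (A.vSetoid ⊤) with hmkV
  set Q : SimpleGraph (A.quotV ⊤) := SimpleGraph.fromRel (fun a b =>
    ∃ e : G.E, ¬ A.Vertical ⊤ e ∧ Sym2.map mkV (G.ends e) = s(a, b)) with hQ
  have hmkact : ∀ (γ : Γ) (a : G.V), mkV (A.actV γ a) = mkV a :=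
    fun γ a => (Quotient.sound ⟨γ, Subgroup.mem_top _, rfl⟩ : mkV a = mkV (A.actV γ a)).symm
  -- connectivity
  have hconn : Q.Connected := by
    rw [SimpleGraph.connected_iff]
    constructor
    · intro a b
      induction a using Quotient.ind with | _ x =>
      induction b using Quotient.ind with | _ y =>
      have hwalk : ∀ (x y : G.V),
          (SimpleGraph.fromRel fun a b : G.V => ∃ e : G.E, G.ends e = s(a, b)).Walk x y →
          Q.Reachable (mkV x) (mkV y) := by
        intro x y p
        induction p with
        | nil => exact SimpleGraph.Reachable.refl _
        | @cons x' z' y' h p ih =>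
          refine SimpleGraph.Reachable.trans ?_ ih
          obtain ⟨hne, hor⟩ := h
          obtain ⟨e, he⟩ : ∃ e, G.ends e = s(x', z') := by
            rcases hor with ⟨e, he⟩ | ⟨e, he⟩
            · exact ⟨e, he⟩
            · exact ⟨e, by rw [he, Sym2.eq_swap]⟩
          by_cases hv : A.vrel ⊤ x' z'
          · rw [show mkV x' = mkV z' from Quotient.sound hv]
          · have hnv : ¬ A.Vertical ⊤ e := by
              rintro ⟨a', b', hab', δ, -, hδ⟩
              rw [he] at hab'
              rcases Sym2.eq_iff.mp hab'.symm with ⟨rfl, rfl⟩ | ⟨rfl, rfl⟩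
              · exact hv ⟨δ, Subgroup.mem_top _, hδ⟩
              · exact hv ((A.vSetoid ⊤).iseqv.symm ⟨δ, Subgroup.mem_top _, hδ⟩)
            refine SimpleGraph.Adj.reachable ⟨?_, Or.inl ⟨e, hnv, ?_⟩⟩
            · exact fun hc => hv (Quotient.exact hc)
            · rw [he, Sym2.map_pair_eq]
      obtain ⟨p⟩ := G.connected.preconnected x y
      exact hwalk x y p
    · exact Nonempty.map mkV G.connected.nonempty
  -- surjection from quotE onto edge set
  have hsurj : ∃ f : A.quotE ⊤ → Q.edgeSet, Function.Surjective f := by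
    have hwd : ∀ (s t : {e : G.E // ¬ A.Vertical ⊤ e}),
        ((A.eSetoid ⊤).comap Subtype.val) s t →
        Sym2.map mkV (G.ends s.val) = Sym2.map mkV (G.ends t.val) := by
      rintro s t ⟨δ, -, hδ⟩
      rw [← hδ, A.ends_map, Sym2.map_map]
      exact congrArg (fun f => Sym2.map f (G.ends s.val)) (funext fun a => (hmkact δ a).symm)
    have hmem : ∀ s : {e : G.E // ¬ A.Vertical ⊤ e}, Sym2.map mkV (G.ends s.val) ∈ Q.edgeSet := by
      intro s
      obtain ⟨b, hab⟩ : ∃ b, G.ends s.val = s((G.ends s.val).out.1, b) :=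
        Sym2.mem_iff_exists.mp (Sym2.out_fst_mem _)
      set a := (G.ends s.val).out.1
      rw [hab, Sym2.map_pair_eq, SimpleGraph.mem_edgeSet]
      refine ⟨?_, Or.inl ⟨s.val, s.prop, by rw [hab, Sym2.map_pair_eq]⟩⟩
      intro hc
      exact s.prop ⟨a, b, hab, Quotient.exact hc⟩
    refine ⟨fun ω => ⟨Quotient.lift (fun s => Sym2.map mkV (G.ends s.val)) hwd ω, ?_⟩, ?_⟩
    · induction ω using Quotient.ind with | _ s => exact hmem s
    · rintro ⟨q, hq⟩
      obtain ⟨b, hab⟩ : ∃ b, q = s(q.out.1, b) := Sym2.mem_iff_exists.mp (Sym2.out_fst_mem _)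
      set a := q.out.1
      rw [hab, SimpleGraph.mem_edgeSet] at hq
      obtain ⟨-, hor⟩ := hq
      have : ∃ e : G.E, ¬ A.Vertical ⊤ e ∧ Sym2.map mkV (G.ends e) = s(a, b) := by
        rcases hor with ⟨e, h1, h2⟩ | ⟨e, h1, h2⟩
        · exact ⟨e, h1, h2⟩
        · exact ⟨e, h1, by rw [h2, Sym2.eq_swap]⟩
      obtain ⟨e, h1, h2⟩ := this
      exact ⟨Quotient.mk _ ⟨e, h1⟩, Subtype.ext (by rw [← hab] at h2; exact h2)⟩
  obtain ⟨f, hf⟩ := hsurj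
  have h1 : Nat.card Q.edgeSet ≤ Nat.card (A.quotE ⊤) := Nat.card_le_card_of_surjective f hf
  have h2 := conn_bound Q hconn
  rw [Fintype.card_eq_nat_card (α := A.quotE ⊤)]
  omega

end Dev7b

section Dev8

def GoodQ (q : ℚ) : Prop :=
  (q = 0 ∨ 1 ≤ q) ∧ (q ≤ 1 ∨ 4/3 ≤ q) ∧ (q ≤ 2 ∨ 7/3 ≤ q)

lemma goodQ_zero : GoodQ 0 := ⟨Or.inl rfl, Or.inl (by norm_num), Or.inl (by norm_num)⟩

lemma goodQ_add {a b : ℚ} (ha : GoodQ a) (hb : GoodQ b) : GoodQ (a + b) := by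
  rcases ha.1 with h | a1
  · rw [h, zero_add]; exact hb
  rcases hb.1 with h | b1
  · rw [h, add_zero]; exact ha
  obtain ⟨-, a2, a3⟩ := ha
  obtain ⟨-, b2, b3⟩ := hb
  refine ⟨Or.inr (by linarith), Or.inr (by linarith), ?_⟩
  by_cases h : a + b ≤ 2
  · exact Or.inl h
  · rcases a2 with a2 | a2
    · rcases b2 with b2 | b2
      · exact absurd (by linarith : a + b ≤ 2) h
      · exact Or.inr (by linarith)
    · exact Or.inr (by linarith)

lemma goodQ_term (w r : ℕ) (hr : 1 ≤ r) : GoodQ (2 * (1 - 1/(r:ℚ)) + (w:ℚ)) := by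
  have hr1 : (1:ℚ) ≤ (r:ℚ) := by exact_mod_cast hr
  have hrpos : (0:ℚ) < (r:ℚ) := by linarith
  have hinv1 : 1/(r:ℚ) ≤ 1 := by rw [div_le_one hrpos]; exact hr1
  have hinvpos : 0 < 1/(r:ℚ) := by positivity
  have hw0 : (0:ℚ) ≤ (w:ℚ) := Nat.cast_nonneg w
  have hcast : ∀ m : ℕ, m ≤ w → (m:ℚ) ≤ (w:ℚ) := fun m hm => by exact_mod_cast hm
  have hcast' : ∀ m : ℕ, w ≤ m → (w:ℚ) ≤ (m:ℚ) := fun m hm => by exact_mod_cast hm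
  rcases Nat.lt_or_ge r 2 with h2 | h2
  · -- r = 1
    have hre : r = 1 := by omega
    subst hre
    have hval : 2 * (1 - 1/((1:ℕ):ℚ)) + (w:ℚ) = (w:ℚ) := by norm_num
    rw [hval]
    rcases Nat.lt_or_ge w 1 with hw | hw
    · have : w = 0 := by omega
      subst this
      exact goodQ_zero
    · have hw1 : (1:ℚ) ≤ (w:ℚ) := hcast 1 hw
      refine ⟨Or.inr hw1, ?_, ?_⟩
      · rcases Nat.lt_or_ge w 2 with hw2 | hw2
        · exact Or.inl (by have := hcast' 1 (by omega); push_cast at this; linarith)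
        · exact Or.inr (by have := hcast 2 hw2; push_cast at this; linarith)
      · rcases Nat.lt_or_ge w 3 with hw3 | hw3
        · exact Or.inl (by have := hcast' 2 (by omega); push_cast at this; linarith)
        · exact Or.inr (by have := hcast 3 hw3; push_cast at this; linarith)
  · -- r ≥ 2
    have hr2 : (2:ℚ) ≤ (r:ℚ) := by exact_mod_cast h2
    have hinv2 : 1/(r:ℚ) ≤ 1/2 := by
      apply div_le_div_of_nonneg_left <;> linarith
    rcases Nat.lt_or_ge r 3 with h3 | h3
    · -- r = 2
      have hre : r = 2 := by omega
      subst hre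
      have hval : 2 * (1 - 1/((2:ℕ):ℚ)) + (w:ℚ) = 1 + (w:ℚ) := by norm_num
      rw [hval]
      rcases Nat.lt_or_ge w 1 with hw | hw
      · have : w = 0 := by omega
        subst this
        refine ⟨Or.inr (by norm_num), Or.inl (by norm_num), Or.inl (by norm_num)⟩
      · have hw1 : (1:ℚ) ≤ (w:ℚ) := hcast 1 hw
        refine ⟨Or.inr (by linarith), Or.inr (by linarith), ?_⟩
        rcases Nat.lt_or_ge w 2 with hw2 | hw2
        · exact Or.inl (by have := hcast' 1 (by omega); push_cast at this; linarith)
        · exact Or.inr (by have := hcast 2 hw2; push_cast at this; linarith)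
    · -- r ≥ 3
      have hr3 : (3:ℚ) ≤ (r:ℚ) := by exact_mod_cast h3
      have hinv3 : 1/(r:ℚ) ≤ 1/3 := by
        apply div_le_div_of_nonneg_left <;> linarith
      rcases Nat.lt_or_ge w 1 with hw | hw
      · have : w = 0 := by omega
        subst this
        have hval : 2 * (1 - 1/(r:ℚ)) + ((0:ℕ):ℚ) = 2 - 2/(r:ℚ) := by
          push_cast; ring
        rw [hval]
        have h2r : 2/(r:ℚ) = 2 * (1/(r:ℚ)) := by ring
        refine ⟨Or.inr (by rw [h2r]; linarith), Or.inr (by rw [h2r]; linarith),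
          Or.inl (by rw [h2r]; linarith)⟩
      · have hw1 : (1:ℚ) ≤ (w:ℚ) := hcast 1 hw
        exact ⟨Or.inr (by linarith), Or.inr (by linarith), Or.inr (by linarith)⟩

lemma goodQ_sum {ι : Type} (s : Finset ι) (f : ι → ℚ) (h : ∀ i ∈ s, GoodQ (f i)) :
    GoodQ (∑ i ∈ s, f i) :=
  Finset.sum_induction f GoodQ (fun _ _ => goodQ_add) goodQ_zero h

end Dev8

theorem hurwitz_genus_bound' {Γ : Type} [Group Γ] {G : Multigraph}
    (A : GraphAction Γ G) (hA : A.ActsHarmonically) (g : ℤ) (hg : G.genus = g)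
    (h2 : 2 ≤ g) :
    (Nat.card Γ : ℤ) ≤ 6 * (g - 1) := by
  haveI := finite_gamma A
  set n := Nat.card Γ with hn
  have hn1 : 1 ≤ n := Nat.card_pos
  have hnpos : (0:ℚ) < (n:ℚ) := by exact_mod_cast hn1
  set E' := Fintype.card (A.quotE ⊤) with hE'
  set V' := Fintype.card (A.quotV ⊤) with hV'
  set S1 : ℚ := ∑ ω : A.quotV ⊤, (n:ℚ) / (A.r ⊤ ω : ℚ) with hS1
  set S2 : ℚ := ∑ ω : A.quotV ⊤, (n:ℚ) * (A.w ⊤ ω : ℚ) with hS2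
  set R : ℚ := ∑ ω : A.quotV ⊤, (2 * (1 - 1/(A.r ⊤ ω : ℚ)) + (A.w ⊤ ω : ℚ)) with hR
  have hV : (Fintype.card G.V : ℚ) = S1 := cardV A
  have hE : (Fintype.card G.E : ℚ) = (E':ℚ) * (n:ℚ) + S2/2 := by
    have h1 := cardE_split A
    have h2 := cardE_nonvert A hA
    have h3 := two_mul_vert A
    have h4 := sum_vert_grouped A hA
    have h5 : (Nat.card {e : G.E // A.Vertical ⊤ e} : ℚ) = S2 / 2 := by
      rw [hS2, ← h4, h3]
      push_cast
      ring
    have h6 : (Nat.card {e : G.E // ¬ A.Vertical ⊤ e} : ℚ) = (E':ℚ) * (n:ℚ) := by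
      exact_mod_cast congrArg (Nat.cast : ℕ → ℚ) h2
    have h7 : (Nat.card {e : G.E // A.Vertical ⊤ e} : ℚ)
        + (Nat.card {e : G.E // ¬ A.Vertical ⊤ e} : ℚ) = (Fintype.card G.E : ℚ) := by
      exact_mod_cast congrArg (Nat.cast : ℕ → ℚ) h1
    linarith
  have hRn : (n:ℚ) * R = 2*(n:ℚ)*(V':ℚ) - 2*S1 + S2 := by
    rw [hR, Finset.mul_sum]
    have hterm : ∀ ω : A.quotV ⊤, (n:ℚ) * (2 * (1 - 1/(A.r ⊤ ω : ℚ)) + (A.w ⊤ ω : ℚ))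
        = 2*(n:ℚ) - 2*((n:ℚ)/(A.r ⊤ ω : ℚ)) + (n:ℚ)*(A.w ⊤ ω : ℚ) := fun ω => by ring
    rw [Finset.sum_congr rfl fun ω _ => hterm ω, Finset.sum_add_distrib,
      Finset.sum_sub_distrib, Finset.sum_const, Finset.card_univ, nsmul_eq_mul,
      ← Finset.mul_sum, ← hS1, ← hS2, ← hV']
    ring
  have hg1 : (g:ℚ) - 1 = (Fintype.card G.E : ℚ) - (Fintype.card G.V : ℚ) := by
    rw [Multigraph.genus] at hg
    have : ((Fintype.card G.E : ℤ) : ℚ) - ((Fintype.card G.V : ℤ) : ℚ) + 1 = (g:ℚ) := by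
      exact_mod_cast congrArg (Int.cast : ℤ → ℚ) hg
    push_cast at this
    linarith
  have hFkey : (g:ℚ) - 1 = (n:ℚ) * ((E':ℚ) - (V':ℚ) + R/2) := by
    linear_combination hg1 + hE - hV - hRn/2
  have hgood : GoodQ R :=
    goodQ_sum _ _ fun ω _ => goodQ_term (A.w ⊤ ω) (A.r ⊤ ω) (r_pos A ω)
  obtain ⟨c1, c2, c3⟩ := hgood
  have hR0 : 0 ≤ R := by
    rcases c1 with h | h
    · exact h.ge
    · linarith
  have hgm : (1:ℚ) ≤ (g:ℚ) - 1 := by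
    have : (2:ℚ) ≤ (g:ℚ) := by exact_mod_cast h2
    linarith
  have hFpos : 0 < (E':ℚ) - (V':ℚ) + R/2 := by
    by_contra hcon
    push_neg at hcon
    nlinarith
  have hVE := quot_bound A
  have hF6 : 1/6 ≤ (E':ℚ) - (V':ℚ) + R/2 := by
    rcases Nat.lt_or_ge E' V' with hc | hc
    · have hveq : V' = E' + 1 := by omega
      have hcast : (V':ℚ) = (E':ℚ) + 1 := by exact_mod_cast hveq
      rcases c3 with h | h
      · exfalso
        rw [hcast] at hFpos
        linarith
      · rw [hcast]
        linarith
    · rcases Nat.eq_or_lt_of_le hc with hceq | hclt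
      · have hcast : (V':ℚ) = (E':ℚ) := by exact_mod_cast hceq
        rcases c1 with h | h
        · exfalso
          rw [hcast, h] at hFpos
          linarith
        · rw [hcast]
          linarith
      · have hcast : (V':ℚ) + 1 ≤ (E':ℚ) := by exact_mod_cast hclt
        linarith
  have hfin : (n:ℚ) ≤ 6*((g:ℚ)-1) := by nlinarith
  have hfin2 : ((n:ℤ):ℚ) ≤ ((6*(g-1):ℤ):ℚ) := by push_cast; linarith
  exact_mod_cast hfin2

/-- Hurwitz genus bound for graphs. If `Γ` acts harmonically on a
graph `G` of genus `g ≥ 2`, then `|Γ| ≤ 6(g − 1)`. -/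
theorem hurwitz_genus_bound {Γ : Type} [Group Γ] {G : Multigraph}
    (A : GraphAction Γ G) (hA : A.ActsHarmonically) (g : ℤ) (hg : G.genus = g)
    (h2 : 2 ≤ g) :
    (Nat.card Γ : ℤ) ≤ 6 * (g - 1) :=
  hurwitz_genus_bound' A hA g hg h2
end
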